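/- arXiv:1111.7207 — 3 statements merged into one kernel-verified Lean document; each statement's English description precedes it below -/
import Mathlib

section
/- Let n ≥ 1 and 0 < λ ≤ Λ. There exist constants c₁, c₂ > 0, depending only on n, λ and Λ, such that for every normalized convex set Z ⊂ ℝⁿ and every function v : closure(Z) → ℝ which is continuous on closure(Z), convex and C² in Z, with v = 0 on ∂Z and λ ≤ det D²v(x) ≤ Λ for all x ∈ Z, one has c₁ ≤ |inf_Z v| ≤ c₂ (equivalently, c₁ ≤ −inf_Z v ≤ c₂, since v ≤ 0). -/
open MeasureTheory Metric Set
open scoped Pointwise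

noncomputable def hessMatrix {n : ℕ} (u : EuclideanSpace ℝ (Fin n) → ℝ)
    (x : EuclideanSpace ℝ (Fin n)) : Matrix (Fin n) (Fin n) ℝ :=
  fun i j => iteratedFDeriv ℝ 2 u x ![EuclideanSpace.single i (1 : ℝ), EuclideanSpace.single j 1]

noncomputable def hessNorm {n : ℕ} (u : EuclideanSpace ℝ (Fin n) → ℝ)
    (x : EuclideanSpace ℝ (Fin n)) : ℝ :=
  ‖Matrix.toEuclideanCLM (𝕜 := ℝ) (hessMatrix u x)‖

noncomputable def hessDet {n : ℕ} (u : EuclideanSpace ℝ (Fin n) → ℝ)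
    (x : EuclideanSpace ℝ (Fin n)) : ℝ :=
  (hessMatrix u x).det

def IsNormalized {n : ℕ} (Z : Set (EuclideanSpace ℝ (Fin n))) : Prop :=
  IsOpen Z ∧ Convex ℝ Z ∧ ball (0 : EuclideanSpace ℝ (Fin n)) 1 ⊆ Z ∧ Z ⊆ ball 0 n

section Aux

open Filter Finset Matrix

variable {n : ℕ}

/-- 1D second derivative test: at an interior local max, second derivative is ≤ 0. -/
lemma secondDeriv_nonpos_of_isLocalMax {φ : ℝ → ℝ} {c : ℝ}
    (hd : ∀ᶠ t in nhds (0:ℝ), DifferentiableAt ℝ φ t)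
    (hc : HasDerivAt (deriv φ) c 0) (hmax : IsLocalMax φ 0) : c ≤ 0 := by
  by_contra hc'
  push_neg at hc'
  have h0 : deriv φ 0 = 0 := hmax.deriv_eq_zero
  have hslope : Tendsto (slope (deriv φ) 0) (nhdsWithin 0 {(0:ℝ)}ᶜ) (nhds c) :=
    hasDerivAt_iff_tendsto_slope.1 hc
  have hev : ∀ᶠ t in nhds (0:ℝ), t ≠ 0 → 0 < slope (deriv φ) 0 t := by
    have := hslope.eventually (eventually_gt_nhds hc')
    rwa [eventually_nhdsWithin_iff] at this
  have hall : ∀ᶠ t in nhds (0:ℝ),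
      (t ≠ 0 → 0 < slope (deriv φ) 0 t) ∧ DifferentiableAt ℝ φ t ∧ φ t ≤ φ 0 :=
    hev.and (hd.and hmax)
  obtain ⟨δ, hδ, hP⟩ := Metric.eventually_nhds_iff.1 hall
  have hmem : ∀ t : ℝ, -(δ/2) ≤ t → t ≤ 0 → dist t 0 < δ := by
    intro t h1 h2
    rw [Real.dist_eq, sub_zero, abs_lt]
    constructor <;> linarith
  have hmem' : ∀ t ∈ Set.Icc (-(δ/2)) (0:ℝ), dist t 0 < δ := fun t ht => hmem t ht.1 ht.2
  have hderneg : ∀ t ∈ Set.Ioo (-(δ/2)) (0:ℝ), deriv φ t < 0 := by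
    intro t ht
    have htne : t ≠ 0 := ne_of_lt ht.2
    have := (hP (hmem t ht.1.le ht.2.le)).1 htne
    rw [slope_def_field, h0, sub_zero, sub_zero, div_eq_mul_inv] at this
    nlinarith [ht.2, mul_pos_iff.1 this, inv_neg''.2 ht.2]
  have hanti : StrictAntiOn φ (Set.Icc (-(δ/2)) 0) := by
    apply strictAntiOn_of_deriv_neg (convex_Icc _ _)
    · exact fun t ht => ((hP (hmem' t ht)).2.1.continuousAt).continuousWithinAt
    · intro t ht
      rw [interior_Icc] at ht
      exact hderneg t ht
  have h1 : φ 0 < φ (-(δ/2)) := by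
    apply hanti (by constructor <;> [linarith; linarith] : (-(δ/2):ℝ) ∈ Set.Icc (-(δ/2)) (0:ℝ)) (by constructor <;> linarith) (by linarith)
  have h2 : φ (-(δ/2)) ≤ φ 0 := (hP (hmem _ (le_refl _) (by linarith))).2.2
  linarith

/-- The restriction of a C² function to a line: eventual differentiability and the
second derivative at 0. -/
lemma line_restrict {v : EuclideanSpace ℝ (Fin n) → ℝ} {x : EuclideanSpace ℝ (Fin n)}
    (hv : ContDiffAt ℝ 2 v x) (h : EuclideanSpace ℝ (Fin n)) :
    (∀ᶠ t in nhds (0:ℝ), DifferentiableAt ℝ (fun s : ℝ => v (x + s • h)) t) ∧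
    HasDerivAt (deriv (fun s : ℝ => v (x + s • h)))
      (fderiv ℝ (fderiv ℝ v) x h h) 0 := by
  set L : ℝ → EuclideanSpace ℝ (Fin n) := fun t => x + t • h with hL
  have hLd : ∀ t : ℝ, HasDerivAt L h t := by
    intro t
    exact ((hasDerivAt_const t x).add ((hasDerivAt_id t).smul_const h)).congr_deriv (by simp)
  have hLc : Continuous L := by
    have : Differentiable ℝ L := fun t => (hLd t).differentiableAt
    exact this.continuous
  have hL0 : L 0 = x := by simp [hL]
  have hev : ∀ᶠ t in nhds (0:ℝ), ContDiffAt ℝ 2 v (L t) := by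
    have h1 : ∀ᶠ y in nhds x, ContDiffAt ℝ 2 v y := hv.eventually (by norm_num)
    have : Tendsto L (nhds 0) (nhds x) := by
      rw [← hL0]; exact hLc.continuousAt
    exact this.eventually h1
  have hdiff : ∀ᶠ t in nhds (0:ℝ), DifferentiableAt ℝ (fun s : ℝ => v (x + s • h)) t := by
    refine hev.mono fun t ht => ?_
    have : DifferentiableAt ℝ v (L t) := ht.differentiableAt two_ne_zero
    exact this.comp t (hLd t).differentiableAt
  refine ⟨hdiff, ?_⟩
  -- identify the derivative
  have hderiv_eq : ∀ᶠ t in nhds (0:ℝ),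
      deriv (fun s : ℝ => v (x + s • h)) t = fderiv ℝ v (L t) h := by
    refine hev.mono fun t ht => ?_
    have hD : DifferentiableAt ℝ v (L t) := ht.differentiableAt two_ne_zero
    have := hD.hasFDerivAt.comp_hasDerivAt t (hLd t)
    exact this.deriv
  have hf' : DifferentiableAt ℝ (fderiv ℝ v) x :=
    (hv.fderiv_right (m := 1) (le_refl _)).differentiableAt one_ne_zero
  have hcomp : HasDerivAt (fun t : ℝ => fderiv ℝ v (L t)) (fderiv ℝ (fderiv ℝ v) x h) 0 := by
    have hx : HasFDerivAt (fderiv ℝ v) (fderiv ℝ (fderiv ℝ v) x) (L 0) := by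
      rw [hL0]; exact hf'.hasFDerivAt
    exact hx.comp_hasDerivAt 0 (hLd 0)
  have happ : HasDerivAt (fun t : ℝ => fderiv ℝ v (L t) h)
      (fderiv ℝ (fderiv ℝ v) x h h) 0 := by
    have := hcomp.clm_apply (hasDerivAt_const 0 h)
    simpa using this
  exact happ.congr_of_eventuallyEq hderiv_eq

lemma euclid_sum_single (u : EuclideanSpace ℝ (Fin n)) :
    u = ∑ i, u i • EuclideanSpace.single i (1:ℝ) := by
  have := (EuclideanSpace.basisFun (Fin n) ℝ).toBasis.sum_repr u
  simp only [OrthonormalBasis.coe_toBasis_repr_apply, OrthonormalBasis.coe_toBasis,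
    EuclideanSpace.basisFun_repr, EuclideanSpace.basisFun_apply] at this
  exact this.symm

lemma quadForm_expand (B : EuclideanSpace ℝ (Fin n) →L[ℝ] EuclideanSpace ℝ (Fin n) →L[ℝ] ℝ)
    (u : EuclideanSpace ℝ (Fin n)) :
    B u u = dotProduct (⇑u) ((Matrix.of fun i j =>
      B (EuclideanSpace.single i 1) (EuclideanSpace.single j 1)) *ᵥ ⇑u) := by
  have h1 : ∀ w : EuclideanSpace ℝ (Fin n),
      B u w = ∑ i, u i * B (EuclideanSpace.single i 1) w := by
    intro w
    have hB : B u = ∑ i, u i • B (EuclideanSpace.single i 1) := by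
      conv_lhs => rw [euclid_sum_single u]
      rw [map_sum]
      simp only [_root_.map_smul]
    rw [hB, ContinuousLinearMap.sum_apply]
    simp
  have h2 : ∀ i, B (EuclideanSpace.single i 1) u
      = ∑ j, u j * B (EuclideanSpace.single i 1) (EuclideanSpace.single j 1) := by
    intro i
    conv_lhs => rw [euclid_sum_single u]
    rw [map_sum]
    simp
  rw [h1]
  unfold dotProduct Matrix.mulVec
  refine Finset.sum_congr rfl fun i _ => ?_
  rw [h2 i]
  show u i * _ = u i * dotProduct _ _
  unfold dotProduct
  rw [Finset.mul_sum, Finset.mul_sum]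
  refine Finset.sum_congr rfl fun j _ => ?_
  simp only [Matrix.of_apply]
  show u i * (u j * _) = u i * (_ * (WithLp.equiv 2 _) u j)
  show u i * (u j * _) = u i * (_ * u j)
  ring

lemma dotProduct_self_eq_norm_sq (u : EuclideanSpace ℝ (Fin n)) :
    dotProduct (⇑u) (⇑u) = ‖u‖ ^ 2 := by
  rw [← real_inner_self_eq_norm_sq]
  rw [PiLp.inner_apply]
  rfl

lemma eigenvalue_quadForm (M : Matrix (Fin n) (Fin n) ℝ) (hM : M.IsHermitian) (i : Fin n) :
    dotProduct (⇑(hM.eigenvectorBasis i)) (M *ᵥ ⇑(hM.eigenvectorBasis i))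
      = hM.eigenvalues i := by
  rw [hM.mulVec_eigenvectorBasis i]
  rw [dotProduct_smul]
  rw [smul_eq_mul, dotProduct_self_eq_norm_sq]
  have : ‖hM.eigenvectorBasis i‖ = 1 := hM.eigenvectorBasis.orthonormal.1 i
  rw [this]; ring

lemma det_le_of_quadForm (M : Matrix (Fin n) (Fin n) ℝ) (hM : M.IsHermitian) (c : ℝ)
    (h1 : ∀ u : EuclideanSpace ℝ (Fin n), 0 ≤ dotProduct (⇑u) (M *ᵥ ⇑u))
    (h2 : ∀ u : EuclideanSpace ℝ (Fin n), dotProduct (⇑u) (M *ᵥ ⇑u) ≤ c * ‖u‖ ^ 2) :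
    M.det ≤ c ^ n := by
  have hdet : M.det = ∏ i, hM.eigenvalues i := by
    simpa using hM.det_eq_prod_eigenvalues
  rw [hdet]
  have : ∀ i : Fin n, hM.eigenvalues i ≤ c ∧ 0 ≤ hM.eigenvalues i := by
    intro i
    rw [← eigenvalue_quadForm M hM i]
    refine ⟨le_trans (h2 _) ?_, h1 _⟩
    rw [hM.eigenvectorBasis.orthonormal.1 i]; norm_num
  calc ∏ i, hM.eigenvalues i ≤ ∏ _i : Fin n, c :=
        Finset.prod_le_prod (fun i _ => (this i).2) (fun i _ => (this i).1)
    _ = c ^ n := by simp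

lemma pow_le_det_of_quadForm (M : Matrix (Fin n) (Fin n) ℝ) (hM : M.IsHermitian) (b : ℝ)
    (hb : 0 ≤ b)
    (h : ∀ u : EuclideanSpace ℝ (Fin n), b * ‖u‖ ^ 2 ≤ dotProduct (⇑u) (M *ᵥ ⇑u)) :
    b ^ n ≤ M.det := by
  have hdet : M.det = ∏ i, hM.eigenvalues i := by
    simpa using hM.det_eq_prod_eigenvalues
  rw [hdet]
  have hbound : ∀ i : Fin n, b ≤ hM.eigenvalues i := by
    intro i
    rw [← eigenvalue_quadForm M hM i]
    refine le_trans ?_ (h _)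
    rw [hM.eigenvectorBasis.orthonormal.1 i]; norm_num
  calc (b:ℝ) ^ n = ∏ _i : Fin n, b := by simp
    _ ≤ ∏ i, hM.eigenvalues i :=
        Finset.prod_le_prod (fun i _ => hb) (fun i _ => hbound i)

lemma quad_nonneg_of_convexOn {Z : Set (EuclideanSpace ℝ (Fin n))} (hZo : IsOpen Z)
    {v : EuclideanSpace ℝ (Fin n) → ℝ} (hvc : ConvexOn ℝ Z v)
    (hsm : ContDiffOn ℝ 2 v Z) {x : EuclideanSpace ℝ (Fin n)} (hx : x ∈ Z)
    (h : EuclideanSpace ℝ (Fin n)) :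
    0 ≤ fderiv ℝ (fderiv ℝ v) x h h := by
  set A : ℝ →ᵃ[ℝ] EuclideanSpace ℝ (Fin n) := AffineMap.lineMap x (x + h) with hA
  have heq : ∀ t : ℝ, A t = x + t • h := by
    intro t
    simp only [hA, AffineMap.lineMap_apply, vsub_eq_sub, vadd_eq_add, add_sub_cancel_left]
    exact add_comm _ _
  set s : Set ℝ := A ⁻¹' Z with hs
  have hseq : s = (fun t : ℝ => x + t • h) ⁻¹' Z := by
    ext t; simp only [hs, Set.mem_preimage, heq t]
  have hsopen : IsOpen s := by
    rw [hseq]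
    exact hZo.preimage (continuous_const.add (continuous_id.smul continuous_const))
  have h0s : (0:ℝ) ∈ s := by
    show A 0 ∈ Z
    rw [heq]; simpa using hx
  set φ : ℝ → ℝ := fun t => v (x + t • h) with hφ
  have hconv : ConvexOn ℝ s φ := by
    have := hvc.comp_affineMap A
    have hfe : φ = v ∘ A := by
      funext t
      simp [hφ, Function.comp, heq t]
    rw [hfe]; exact this
  have hdiffs : ∀ t ∈ s, DifferentiableAt ℝ φ t := by
    intro t ht
    have hmem : x + t • h ∈ Z := by rw [← heq]; exact ht
    have hv : DifferentiableAt ℝ v (x + t • h) :=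
      ((hsm.contDiffAt (hZo.mem_nhds hmem)).differentiableAt two_ne_zero)
    have hL : DifferentiableAt ℝ (fun t : ℝ => x + t • h) t := by
      apply DifferentiableAt.const_add
      exact (differentiableAt_id.smul_const h)
    exact hv.comp t hL
  have hmono : MonotoneOn (deriv φ) s := hconv.monotoneOn_deriv hdiffs
  have hcd : ContDiffAt ℝ 2 v x := hsm.contDiffAt (hZo.mem_nhds hx)
  obtain ⟨hd, hc⟩ := line_restrict hcd h
  have hslope : Tendsto (slope (deriv φ) 0) (nhdsWithin 0 {(0:ℝ)}ᶜ)
      (nhds (fderiv ℝ (fderiv ℝ v) x h h)) := hasDerivAt_iff_tendsto_slope.1 hc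
  have hev : ∀ᶠ t in nhdsWithin 0 {(0:ℝ)}ᶜ, 0 ≤ slope (deriv φ) 0 t := by
    have hsnb : s ∈ nhdsWithin (0:ℝ) {(0:ℝ)}ᶜ :=
      mem_nhdsWithin_of_mem_nhds (hsopen.mem_nhds h0s)
    filter_upwards [hsnb, self_mem_nhdsWithin] with t ht htne
    rw [slope_def_field]
    rcases lt_or_gt_of_ne (htne : t ≠ 0) with hlt | hgt
    · have := hmono ht h0s hlt.le
      have ht0 : t - 0 < 0 := by linarith
      exact div_nonneg_iff.2 (Or.inr ⟨by linarith, by linarith⟩)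
    · have := hmono h0s ht hgt.le
      have ht0 : (0:ℝ) < t - 0 := by linarith
      apply div_nonneg <;> linarith
  exact ge_of_tendsto hslope hev

lemma quad_le_of_isLocalMax {v : EuclideanSpace ℝ (Fin n) → ℝ}
    {x₀ : EuclideanSpace ℝ (Fin n)} (hcd : ContDiffAt ℝ 2 v x₀) (a c₀ : ℝ)
    (hloc : IsLocalMax (fun y => v y - a * (‖y‖^2 - c₀)) x₀)
    (h : EuclideanSpace ℝ (Fin n)) :
    fderiv ℝ (fderiv ℝ v) x₀ h h ≤ 2 * a * ‖h‖^2 := by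
  obtain ⟨hd, hc⟩ := line_restrict hcd h
  set c₁ : ℝ := 2 * (inner ℝ x₀ h : ℝ) with hc₁
  set φ : ℝ → ℝ := fun t => v (x₀ + t • h) with hφ
  set q : ℝ → ℝ := fun t => a * (‖x₀‖^2 + t * c₁ + t^2 * ‖h‖^2 - c₀) with hq
  set g : ℝ → ℝ := fun t => φ t - q t with hg
  have hexp : ∀ t : ℝ, ‖x₀ + t • h‖^2 = ‖x₀‖^2 + t * c₁ + t^2 * ‖h‖^2 := by
    intro t
    rw [norm_add_sq_real, real_inner_smul_right, norm_smul]
    simp only [Real.norm_eq_abs, mul_pow, sq_abs, hc₁]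
    ring
  have hgF : g = fun t => (fun y => v y - a * (‖y‖^2 - c₀)) (x₀ + t • h) := by
    funext t
    simp only [hg, hφ, hq, hexp t]
  -- g has a local max at 0
  have hgmax : IsLocalMax g 0 := by
    have hLc : ContinuousAt (fun t : ℝ => x₀ + t • h) 0 :=
      (continuous_const.add (continuous_id.smul continuous_const)).continuousAt
    have htend : Tendsto (fun t : ℝ => x₀ + t • h) (nhds 0) (nhds x₀) := by
      simpa using hLc.tendsto
    have := htend.eventually hloc
    refine this.mono fun t ht => ?_
    rw [hgF]
    simpa using ht
  -- derivative of q
  have hqd : ∀ t : ℝ, HasDerivAt q (a * (c₁ + 2 * t * ‖h‖^2)) t := by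
    intro t
    have h1 : HasDerivAt (fun t : ℝ => ‖x₀‖^2 + t * c₁ + t^2 * ‖h‖^2 - c₀)
        (c₁ + 2 * t * ‖h‖^2) t := by
      have := (((hasDerivAt_id t).mul_const c₁).const_add (‖x₀‖^2)).add
        (((hasDerivAt_pow 2 t)).mul_const (‖h‖^2))
      simpa using (this.sub_const c₀)
    simpa [mul_comm] using h1.const_mul a
  -- g is differentiable near 0
  have hgd : ∀ᶠ t in nhds (0:ℝ), DifferentiableAt ℝ g t :=
    hd.mono fun t ht => ht.sub (hqd t).differentiableAt
  -- deriv g = deriv φ - deriv q near 0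
  have hderg : ∀ᶠ t in nhds (0:ℝ), deriv g t = deriv φ t - a * (c₁ + 2 * t * ‖h‖^2) := by
    refine hd.mono fun t ht => ?_
    rw [hg]
    rw [deriv_fun_sub ht (hqd t).differentiableAt, (hqd t).deriv]
  have hcg : HasDerivAt (deriv g)
      (fderiv ℝ (fderiv ℝ v) x₀ h h - 2 * a * ‖h‖^2) 0 := by
    have h2 : HasDerivAt (fun t : ℝ => deriv φ t - a * (c₁ + 2 * t * ‖h‖^2))
        (fderiv ℝ (fderiv ℝ v) x₀ h h - 2 * a * ‖h‖^2) 0 := by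
      have h3 : HasDerivAt (fun t : ℝ => a * (c₁ + 2 * t * ‖h‖^2)) (2 * a * ‖h‖^2) 0 := by
        have := ((hasDerivAt_id (0:ℝ)).const_mul 2).mul_const (‖h‖^2)
        have h4 := (this.const_add c₁).const_mul a
        simpa [mul_comm, mul_assoc, mul_left_comm] using h4
      exact hc.sub h3
    exact h2.congr_of_eventuallyEq hderg
  have := secondDeriv_nonpos_of_isLocalMax hgd hcg hgmax
  linarith

lemma quad_ge_of_isLocalMin {v : EuclideanSpace ℝ (Fin n) → ℝ}
    {x₀ : EuclideanSpace ℝ (Fin n)} (hcd : ContDiffAt ℝ 2 v x₀) (a c₀ : ℝ)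
    (hloc : IsLocalMin (fun y => v y - a * (‖y‖^2 - c₀)) x₀)
    (h : EuclideanSpace ℝ (Fin n)) :
    2 * a * ‖h‖^2 ≤ fderiv ℝ (fderiv ℝ v) x₀ h h := by
  have hmax : IsLocalMax (fun y => (fun z => -v z) y - (-a) * (‖y‖^2 - c₀)) x₀ := by
    have hfe : (fun y : EuclideanSpace ℝ (Fin n) => (fun z => -v z) y - (-a) * (‖y‖^2 - c₀))
        = fun y => -(v y - a * (‖y‖^2 - c₀)) := funext fun y => by ring
    rw [hfe]
    exact hloc.neg
  have := quad_le_of_isLocalMax hcd.neg (-a) c₀ hmax h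
  have hneg : fderiv ℝ (fderiv ℝ (fun z => -v z)) x₀ h h
      = -(fderiv ℝ (fderiv ℝ v) x₀ h h) := by
    have h1 : (fderiv ℝ (fun z => -v z)) = fun y => -(fderiv ℝ v y) := by
      funext y; exact fderiv_neg
    rw [h1]
    have h2 : fderiv ℝ (fun y => -(fderiv ℝ v y)) x₀ = -(fderiv ℝ (fderiv ℝ v) x₀) :=
      fderiv_neg
    rw [h2]
    simp
  rw [hneg] at this
  linarith

lemma hessMatrix_eq (v : EuclideanSpace ℝ (Fin n) → ℝ) (x : EuclideanSpace ℝ (Fin n)) :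
    hessMatrix v x = Matrix.of fun i j =>
      fderiv ℝ (fderiv ℝ v) x (EuclideanSpace.single i 1) (EuclideanSpace.single j 1) := by
  funext i j
  show iteratedFDeriv ℝ 2 v x ![_, _] = _
  rw [iteratedFDeriv_two_apply]
  simp

lemma hessMatrix_isHermitian {v : EuclideanSpace ℝ (Fin n) → ℝ}
    {x : EuclideanSpace ℝ (Fin n)} (hcd : ContDiffAt ℝ 2 v x) :
    (hessMatrix v x).IsHermitian := by
  have hsym := hcd.isSymmSndFDerivAt (by norm_num)
  show (hessMatrix v x).conjTranspose = hessMatrix v x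
  funext i j
  rw [hessMatrix_eq]
  simp only [Matrix.conjTranspose_apply, Matrix.of_apply, star_trivial]
  exact hsym _ _

lemma closure_compact {Z : Set (EuclideanSpace ℝ (Fin n))} (hZ : IsNormalized Z) :
    IsCompact (closure Z) := by
  have : Bornology.IsBounded Z := (isBounded_ball).subset hZ.2.2.2
  exact this.isCompact_closure

/-- Comparison from above: `v ≤ a(‖y‖² - 1)` on `closure Z`. -/
lemma comparison_above {Z : Set (EuclideanSpace ℝ (Fin n))}
    {v : EuclideanSpace ℝ (Fin n) → ℝ} (hZ : IsNormalized Z)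
    (hcont : ContinuousOn v (closure Z)) (hvc : ConvexOn ℝ Z v)
    (hsm : ContDiffOn ℝ 2 v Z) (hbd : ∀ x ∈ frontier Z, v x = 0)
    {lam : ℝ} (hdet : ∀ x ∈ Z, lam ≤ hessDet v x)
    {a : ℝ} (ha : 0 < a) (ha2 : (2*a)^n < lam) :
    ∀ y ∈ closure Z, v y ≤ a * (‖y‖^2 - 1) := by
  obtain ⟨hZo, hZc, hZb1, hZbn⟩ := hZ
  set F : EuclideanSpace ℝ (Fin n) → ℝ := fun y => v y - a * (‖y‖^2 - 1) with hF
  have hFcont : ContinuousOn F (closure Z) :=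
    hcont.sub (((continuous_norm.pow 2).sub continuous_const).const_smul a).continuousOn
  have hcpt : IsCompact (closure Z) := closure_compact ⟨hZo, hZc, hZb1, hZbn⟩
  have hne : (closure Z).Nonempty := ⟨0, subset_closure (hZb1 (mem_ball_self one_pos))⟩
  obtain ⟨x₀, hx₀, hmax⟩ := hcpt.exists_isMaxOn hne hFcont
  have hx₀frontier : x₀ ∉ Z := by
    intro hx₀Z
    -- interior maximum: contradiction with the determinant lower bound
    have hcd : ContDiffAt ℝ 2 v x₀ := hsm.contDiffAt (hZo.mem_nhds hx₀Z)
    have hloc : IsLocalMax F x₀ :=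
      hmax.isLocalMax (mem_of_superset (hZo.mem_nhds hx₀Z) subset_closure)
    set B := fderiv ℝ (fderiv ℝ v) x₀ with hB
    have hub : ∀ h, B h h ≤ 2 * a * ‖h‖^2 := fun h =>
      quad_le_of_isLocalMax hcd a 1 hloc h
    have hlb : ∀ h, 0 ≤ B h h := fun h => quad_nonneg_of_convexOn hZo hvc hsm hx₀Z h
    have hM : hessMatrix v x₀ = Matrix.of fun i j =>
        B (EuclideanSpace.single i 1) (EuclideanSpace.single j 1) := hessMatrix_eq v x₀
    have hherm : (hessMatrix v x₀).IsHermitian := hessMatrix_isHermitian hcd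
    have hdet' : (hessMatrix v x₀).det ≤ (2*a)^n := by
      apply det_le_of_quadForm _ hherm
      · intro u; rw [hM, ← quadForm_expand]; exact hlb u
      · intro u; rw [hM, ← quadForm_expand]; exact hub u
    have := hdet x₀ hx₀Z
    rw [hessDet] at this
    linarith
  have hx₀f : x₀ ∈ frontier Z := by
    rw [hZo.frontier_eq]
    exact ⟨hx₀, hx₀frontier⟩
  have hFx₀ : F x₀ ≤ 0 := by
    have hv0 : v x₀ = 0 := hbd x₀ hx₀f
    have hnorm : 1 ≤ ‖x₀‖ := by
      by_contra hc
      push_neg at hc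
      exact hx₀frontier (hZb1 (mem_ball_zero_iff.2 hc))
    have : (0:ℝ) ≤ ‖x₀‖^2 - 1 := by nlinarith
    simp only [hF, hv0, zero_sub, neg_nonpos]
    positivity
  intro y hy
  have := hmax hy
  simp only [hF] at this hFx₀ ⊢
  have h1 : v y - a * (‖y‖^2 - 1) ≤ v x₀ - a * (‖x₀‖^2 - 1) := this
  linarith

/-- Comparison from below: `b(‖y‖² - n²) ≤ v` on `closure Z`. -/
lemma comparison_below {Z : Set (EuclideanSpace ℝ (Fin n))}
    {v : EuclideanSpace ℝ (Fin n) → ℝ} (hZ : IsNormalized Z)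
    (hcont : ContinuousOn v (closure Z))
    (hsm : ContDiffOn ℝ 2 v Z) (hbd : ∀ x ∈ frontier Z, v x = 0)
    {Lam : ℝ} (hdet : ∀ x ∈ Z, hessDet v x ≤ Lam)
    {b : ℝ} (hb : 0 < b) (hb2 : Lam < (2*b)^n) :
    ∀ y ∈ closure Z, b * (‖y‖^2 - (n:ℝ)^2) ≤ v y := by
  obtain ⟨hZo, hZc, hZb1, hZbn⟩ := hZ
  set F : EuclideanSpace ℝ (Fin n) → ℝ := fun y => v y - b * (‖y‖^2 - (n:ℝ)^2) with hF
  have hFcont : ContinuousOn F (closure Z) :=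
    hcont.sub (((continuous_norm.pow 2).sub continuous_const).const_smul b).continuousOn
  have hcpt : IsCompact (closure Z) := closure_compact ⟨hZo, hZc, hZb1, hZbn⟩
  have hne : (closure Z).Nonempty := ⟨0, subset_closure (hZb1 (mem_ball_self one_pos))⟩
  obtain ⟨x₀, hx₀, hmin⟩ := hcpt.exists_isMinOn hne hFcont
  have hx₀frontier : x₀ ∉ Z := by
    intro hx₀Z
    have hcd : ContDiffAt ℝ 2 v x₀ := hsm.contDiffAt (hZo.mem_nhds hx₀Z)
    have hloc : IsLocalMin F x₀ :=
      hmin.isLocalMin (mem_of_superset (hZo.mem_nhds hx₀Z) subset_closure)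
    set B := fderiv ℝ (fderiv ℝ v) x₀ with hB
    have hlb : ∀ h, 2 * b * ‖h‖^2 ≤ B h h := fun h =>
      quad_ge_of_isLocalMin hcd b ((n:ℝ)^2) hloc h
    have hM : hessMatrix v x₀ = Matrix.of fun i j =>
        B (EuclideanSpace.single i 1) (EuclideanSpace.single j 1) := hessMatrix_eq v x₀
    have hherm : (hessMatrix v x₀).IsHermitian := hessMatrix_isHermitian hcd
    have hdet' : (2*b)^n ≤ (hessMatrix v x₀).det := by
      apply pow_le_det_of_quadForm _ hherm _ (by positivity)
      intro u; rw [hM, ← quadForm_expand]; exact hlb u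
    have := hdet x₀ hx₀Z
    rw [hessDet] at this
    linarith
  have hx₀f : x₀ ∈ frontier Z := by
    rw [hZo.frontier_eq]
    exact ⟨hx₀, hx₀frontier⟩
  have hFx₀ : 0 ≤ F x₀ := by
    have hv0 : v x₀ = 0 := hbd x₀ hx₀f
    have hnorm : ‖x₀‖ ≤ (n:ℝ) := by
      have h1 : closure Z ⊆ closedBall (0:EuclideanSpace ℝ (Fin n)) n := by
        calc closure Z ⊆ closure (ball (0:EuclideanSpace ℝ (Fin n)) n) := closure_mono hZbn
          _ ⊆ closedBall 0 n := closure_ball_subset_closedBall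
      have := h1 hx₀
      rwa [mem_closedBall_zero_iff] at this
    have hd : ‖x₀‖^2 - (n:ℝ)^2 ≤ 0 := by nlinarith [norm_nonneg x₀]
    simp only [hF, hv0, zero_sub, neg_nonneg]
    nlinarith
  intro y hy
  have := hmin hy
  simp only [hF] at this hFx₀ ⊢
  have h1 : v x₀ - b * (‖x₀‖^2 - (n:ℝ)^2) ≤ v y - b * (‖y‖^2 - (n:ℝ)^2) := this
  linarith

end Aux

theorem alexandrov_inf_bounds (n : ℕ) (hn : 1 ≤ n) (lam Lam : ℝ)
    (hlam : 0 < lam) (hlL : lam ≤ Lam) :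
    ∃ c₁ > 0, ∃ c₂ > 0,
      ∀ (Z : Set (EuclideanSpace ℝ (Fin n))) (v : EuclideanSpace ℝ (Fin n) → ℝ),
      IsNormalized Z →
      ContinuousOn v (closure Z) → ConvexOn ℝ Z v → ContDiffOn ℝ 2 v Z →
      (∀ x ∈ frontier Z, v x = 0) →
      (∀ x ∈ Z, lam ≤ hessDet v x ∧ hessDet v x ≤ Lam) →
      c₁ ≤ |sInf (v '' Z)| ∧ |sInf (v '' Z)| ≤ c₂ := by
  have hn0 : n ≠ 0 := by omega
  have hLam : 0 < Lam := lt_of_lt_of_le hlam hlL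
  set a : ℝ := lam ^ ((n:ℝ)⁻¹) / 4 with ha_def
  set b : ℝ := Lam ^ ((n:ℝ)⁻¹) with hb_def
  have ha : 0 < a := by
    have := Real.rpow_pos_of_pos hlam ((n:ℝ)⁻¹)
    positivity
  have hb : 0 < b := Real.rpow_pos_of_pos hLam _
  have h2n : (1:ℝ) < 2^n := one_lt_pow₀ (by norm_num) hn0
  have ha2 : (2*a)^n < lam := by
    have h1 : (2*a) = lam ^ ((n:ℝ)⁻¹) / 2 := by rw [ha_def]; ring
    rw [h1, div_pow, Real.rpow_inv_natCast_pow hlam.le hn0]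
    exact div_lt_self hlam h2n
  have hb2 : Lam < (2*b)^n := by
    rw [hb_def, mul_pow, Real.rpow_inv_natCast_pow hLam.le hn0]
    exact (lt_mul_iff_one_lt_left hLam).2 h2n
  refine ⟨a, ha, b * (n:ℝ)^2, by positivity, ?_⟩
  intro Z v hZ hcont hvc hsm hbd hdet
  have h0Z : (0:EuclideanSpace ℝ (Fin n)) ∈ Z := hZ.2.2.1 (mem_ball_self one_pos)
  have h0cl : (0:EuclideanSpace ℝ (Fin n)) ∈ closure Z := subset_closure h0Z
  have hup := comparison_above hZ hcont hvc hsm hbd (fun x hx => (hdet x hx).1) ha ha2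
  have hlow := comparison_below hZ hcont hsm hbd (fun x hx => (hdet x hx).2) hb hb2
  have hlow' : ∀ y ∈ closure Z, -(b * (n:ℝ)^2) ≤ v y := by
    intro y hy
    have h1 := hlow y hy
    nlinarith [norm_nonneg y, sq_nonneg (‖y‖)]
  set S : Set ℝ := v '' Z with hS
  have hSne : S.Nonempty := ⟨v 0, 0, h0Z, rfl⟩
  have hSbdd : BddBelow S := by
    refine ⟨-(b * (n:ℝ)^2), ?_⟩
    rintro y ⟨x, hx, rfl⟩
    exact hlow' x (subset_closure hx)
  have hv0 : v 0 ≤ -a := by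
    have := hup 0 h0cl
    simpa using this
  have hinf_le : sInf S ≤ -a := le_trans (csInf_le hSbdd ⟨0, h0Z, rfl⟩) hv0
  have hinf_ge : -(b * (n:ℝ)^2) ≤ sInf S := by
    apply le_csInf hSne
    rintro y ⟨x, hx, rfl⟩
    exact hlow' x (subset_closure hx)
  have habs : |sInf S| = -(sInf S) := abs_of_neg (by linarith)
  rw [habs]
  constructor <;> linarith
end

section
/- Let n ≥ 1 and 0 < λ ≤ Λ. There exist constants c', c'' > 0, depending only on n, λ and Λ, such that for every normalized convex set Z ⊂ ℝⁿ and every function v : closure(Z) → ℝ which is continuous on closure(Z), convex and C² in Z, with v = 0 on ∂Z and λ ≤ det D²v(x) ≤ Λ for all x ∈ Z, there exists a Borel set E ⊆ Z with |E| ≥ c' |Z| and D²v(x) ≥ c'' Id for every x ∈ E (i.e. ⟨D²v(x) ξ, ξ⟩ ≥ c'' |ξ|² for all ξ ∈ ℝⁿ and all x ∈ E). -/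
open MeasureTheory Metric Set
open scoped Pointwise

open Filter Matrix
open scoped Topology ENNReal
set_option maxHeartbeats 2000000

noncomputable def D1 {n : ℕ} (v : EuclideanSpace ℝ (Fin n) → ℝ) :
    EuclideanSpace ℝ (Fin n) → (EuclideanSpace ℝ (Fin n) →L[ℝ] ℝ) := fderiv ℝ v
noncomputable def D2 {n : ℕ} (v : EuclideanSpace ℝ (Fin n) → ℝ) : EuclideanSpace ℝ (Fin n) →
    (EuclideanSpace ℝ (Fin n) →L[ℝ] EuclideanSpace ℝ (Fin n) →L[ℝ] ℝ) := fderiv ℝ (fderiv ℝ v)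


/-- derivative at left endpoint is at most the slope (convex function). -/
lemma convex_deriv_le_slope {S : Set ℝ} {g : ℝ → ℝ} (hc : ConvexOn ℝ S g) {x y d : ℝ}
    (hx : x ∈ S) (hy : y ∈ S) (hxy : x < y) (hd : HasDerivAt g d x) :
    d ≤ (g y - g x) / (y - x) := by
  have htend : Tendsto (slope g x) (𝓝[>] x) (𝓝 d) :=
    (hasDerivAt_iff_tendsto_slope.1 hd).mono_left
      (nhdsWithin_mono _ fun t ht => ne_of_gt ht)
  refine le_of_tendsto htend ?_
  filter_upwards [Ioo_mem_nhdsGT_of_mem (left_mem_Ico.2 hxy)] with s hs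
  have hsS : s ∈ S := hc.1.ordConnected.out hx hy ⟨hs.1.le, hs.2.le⟩
  have := hc.secant_mono hx hsS hy (ne_of_gt hs.1) (ne_of_gt (hxy.trans_le le_rfl))
    hs.2.le
  rw [slope_def_field]
  simpa [div_eq_div_iff] using this

/-- slope is at most the derivative at the right endpoint (convex function). -/
lemma convex_slope_le_deriv {S : Set ℝ} {g : ℝ → ℝ} (hc : ConvexOn ℝ S g) {x y d : ℝ}
    (hx : x ∈ S) (hy : y ∈ S) (hxy : x < y) (hd : HasDerivAt g d y) :
    (g x - g y) / (x - y) ≤ d := by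
  have htend : Tendsto (slope g y) (𝓝[<] y) (𝓝 d) :=
    (hasDerivAt_iff_tendsto_slope.1 hd).mono_left
      (nhdsWithin_mono _ fun t ht => ne_of_lt ht)
  refine ge_of_tendsto htend ?_
  filter_upwards [Ioo_mem_nhdsLT_of_mem (right_mem_Ioc.2 hxy)] with s hs
  have hsS : s ∈ S := hc.1.ordConnected.out hx hy ⟨hs.1.le, hs.2.le⟩
  have := hc.secant_mono hy hx hsS (ne_of_lt hxy) (ne_of_lt hs.2) hs.1.le
  rw [slope_def_field]
  exact this

/-- second derivative of a convex differentiable function is nonnegative. -/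
lemma convex_second_deriv_nonneg {S : Set ℝ} (hS : IsOpen S) {g g' : ℝ → ℝ}
    (hc : ConvexOn ℝ S g) (hg : ∀ t ∈ S, HasDerivAt g (g' t) t) {t₀ c : ℝ}
    (ht₀ : t₀ ∈ S) (hg' : HasDerivAt g' c t₀) : 0 ≤ c := by
  have htend : Tendsto (slope g' t₀) (𝓝[>] t₀) (𝓝 c) :=
    (hasDerivAt_iff_tendsto_slope.1 hg').mono_left
      (nhdsWithin_mono _ fun t ht => ne_of_gt ht)
  refine ge_of_tendsto htend ?_
  filter_upwards [self_mem_nhdsWithin,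
    mem_nhdsWithin_of_mem_nhds (hS.mem_nhds ht₀)] with s hs hsS
  have h1 : g' t₀ ≤ (g s - g t₀) / (s - t₀) :=
    convex_deriv_le_slope hc ht₀ hsS hs (hg t₀ ht₀)
  have h2 : (g t₀ - g s) / (t₀ - s) ≤ g' s :=
    convex_slope_le_deriv hc ht₀ hsS hs (hg s hsS)
  have heq : (g t₀ - g s) / (t₀ - s) = (g s - g t₀) / (s - t₀) := by
    rw [← neg_div_neg_eq]; ring_nf
  rw [slope_def_field]
  have : g' t₀ ≤ g' s := h1.trans (heq ▸ h2)
  have hst : (0:ℝ) < s - t₀ := by simpa using sub_pos.2 (mem_Ioi.1 hs)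
  exact div_nonneg (sub_nonneg.2 this) hst.le

/-- second derivative test: at an interior local minimum the second derivative is ≥ 0. -/
lemma second_deriv_test_localMin {g g' : ℝ → ℝ} {t₀ c : ℝ}
    (hg : ∀ᶠ t in 𝓝 t₀, HasDerivAt g (g' t) t) (hg' : HasDerivAt g' c t₀)
    (hmin : IsLocalMin g t₀) : 0 ≤ c := by
  by_contra hneg
  push_neg at hneg
  have hg'0 : g' t₀ = 0 := by
    have h1 : deriv g t₀ = g' t₀ := hg.self_of_nhds.deriv
    have h2 : deriv g t₀ = 0 := hmin.deriv_eq_zero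
    rw [← h1, h2]
  -- slopes of g' near t₀ are eventually negative
  have htend : Tendsto (slope g' t₀) (𝓝[≠] t₀) (𝓝 c) := hasDerivAt_iff_tendsto_slope.1 hg'
  have hev : ∀ᶠ s in 𝓝[>] t₀, slope g' t₀ s < 0 :=
    ((htend.mono_left (nhdsWithin_mono _ fun t ht => ne_of_gt ht)).eventually
      (eventually_lt_nhds hneg)).mono fun s hs => hs
  have hev' : ∀ᶠ s in 𝓝 t₀, s ∈ Ioi t₀ → g' s < 0 := by
    have := eventually_nhdsWithin_iff.1 hev
    filter_upwards [this] with s hs hmem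
    have hs0 := hs hmem
    rw [slope_def_field, hg'0, sub_zero] at hs0
    have : (0:ℝ) < s - t₀ := sub_pos.2 hmem
    by_contra hcon
    push_neg at hcon
    nlinarith [div_nonneg hcon this.le]
  obtain ⟨ε, hε, hball⟩ := Metric.eventually_nhds_iff.1 (hg.and (hmin.and hev'))
  set b := t₀ + ε / 2 with hb
  have hbmem : ∀ t, t ∈ Icc t₀ b → dist t t₀ < ε := by
    intro t ht
    obtain ⟨htl, htr⟩ := ht
    rw [hb] at htr
    rw [Real.dist_eq, abs_lt]
    constructor <;> linarith
  have hanti : StrictAntiOn g (Icc t₀ b) := by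
    apply strictAntiOn_of_deriv_neg (convex_Icc _ _)
    · intro t ht
      exact ((hball (hbmem t ht)).1).continuousAt.continuousWithinAt
    · intro t ht
      rw [interior_Icc] at ht
      have h := hball (hbmem t ⟨ht.1.le, ht.2.le⟩)
      rw [h.1.deriv]
      exact h.2.2 ht.1
  have hb1 : t₀ ∈ Icc t₀ b := ⟨le_rfl, by simp [hb]; positivity⟩
  have hb2 : b ∈ Icc t₀ b := ⟨by simp [hb]; positivity, le_rfl⟩
  have := hanti hb1 hb2 (by simp [hb]; positivity)
  have hge : g t₀ ≤ g b := ((hball (hbmem b hb2)).2.1)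
  linarith

variable {n : ℕ}

lemma myEuclideanCLM_apply (A : Matrix (Fin n) (Fin n) ℝ) (x : EuclideanSpace ℝ (Fin n))
    (i : Fin n) : (Matrix.toEuclideanCLM (𝕜 := ℝ) A) x i = ∑ j, A i j * x j := by
  have h := Matrix.ofLp_toEuclideanCLM (𝕜 := ℝ) (n := Fin n) A x
  have := congrFun h i
  simpa [Matrix.mulVec, dotProduct] using this

lemma myinner_toEuclideanCLM (A : Matrix (Fin n) (Fin n) ℝ) (x y : EuclideanSpace ℝ (Fin n)) :
    (inner ℝ ((Matrix.toEuclideanCLM (𝕜 := ℝ) A) x) y : ℝ) = ∑ i, (∑ j, A i j * x j) * y i := by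
  rw [PiLp.inner_apply]
  simp [myEuclideanCLM_apply, RCLike.inner_apply]
  exact Finset.sum_congr rfl fun _ _ => mul_comm _ _

lemma quadform_eq_bilin (B : EuclideanSpace ℝ (Fin n) →L[ℝ] EuclideanSpace ℝ (Fin n) →L[ℝ] ℝ)
    (A : Matrix (Fin n) (Fin n) ℝ)
    (hAB : ∀ i j, A i j = B (EuclideanSpace.single i 1) (EuclideanSpace.single j 1))
    (ξ : EuclideanSpace ℝ (Fin n)) :
    (inner ℝ ((Matrix.toEuclideanCLM (𝕜 := ℝ) A) ξ) ξ : ℝ) = B ξ ξ := by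
  have hξ : ∑ i, ξ i • (EuclideanSpace.single i (1:ℝ)) = ξ := by
    simpa [EuclideanSpace.basisFun_apply] using ((EuclideanSpace.basisFun (Fin n) ℝ).sum_repr ξ)
  rw [myinner_toEuclideanCLM]
  conv_rhs => rw [← hξ]
  simp only [map_sum, ContinuousLinearMap.sum_apply, _root_.map_smul,
    ContinuousLinearMap.smul_apply, smul_eq_mul, Finset.sum_mul, Finset.mul_sum, hAB]
  rw [Finset.sum_comm]
  exact Finset.sum_congr rfl fun i _ => Finset.sum_congr rfl fun j _ => by ring

lemma eigen_clm_apply {A : Matrix (Fin n) (Fin n) ℝ} (hA : A.IsHermitian) (k : Fin n) :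
    (Matrix.toEuclideanCLM (𝕜 := ℝ) A) (hA.eigenvectorBasis k)
      = hA.eigenvalues k • (hA.eigenvectorBasis k) := by
  apply WithLp.ofLp_injective
  rw [Matrix.ofLp_toEuclideanCLM]
  simpa using hA.mulVec_eigenvectorBasis k

lemma eigen_rayleigh {A : Matrix (Fin n) (Fin n) ℝ} (hA : A.IsHermitian) (k : Fin n) :
    (inner ℝ ((Matrix.toEuclideanCLM (𝕜 := ℝ) A) (hA.eigenvectorBasis k)) (hA.eigenvectorBasis k) : ℝ)
      = hA.eigenvalues k := by
  rw [eigen_clm_apply, real_inner_smul_left]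
  have h1 := (hA.eigenvectorBasis.orthonormal).1 k
  rw [real_inner_self_eq_norm_sq]
  simp [h1]

lemma eigen_ge_of_quadform {A : Matrix (Fin n) (Fin n) ℝ} (hA : A.IsHermitian) {β : ℝ}
    (h : ∀ ξ : EuclideanSpace ℝ (Fin n),
      β * ‖ξ‖ ^ 2 ≤ (inner ℝ ((Matrix.toEuclideanCLM (𝕜 := ℝ) A) ξ) ξ : ℝ)) (k : Fin n) :
    β ≤ hA.eigenvalues k := by
  have h1 := h (hA.eigenvectorBasis k)
  rw [eigen_rayleigh] at h1
  have h2 := (hA.eigenvectorBasis.orthonormal).1 k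
  simpa [h2] using h1

lemma quadform_ge_of_eigen {A : Matrix (Fin n) (Fin n) ℝ} (hA : A.IsHermitian) {β : ℝ}
    (h : ∀ k, β ≤ hA.eigenvalues k) (ξ : EuclideanSpace ℝ (Fin n)) :
    β * ‖ξ‖ ^ 2 ≤ (inner ℝ ((Matrix.toEuclideanCLM (𝕜 := ℝ) A) ξ) ξ : ℝ) := by
  set b := hA.eigenvectorBasis with hbdef
  have hob := hA.eigenvectorBasis.orthonormal
  set c : Fin n → ℝ := fun k => (inner ℝ (b k) ξ : ℝ) with hcdef
  have hξ : ∑ k, c k • b k = ξ := b.sum_repr' ξ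
  have hexp : (inner ℝ ((Matrix.toEuclideanCLM (𝕜 := ℝ) A) ξ) ξ : ℝ)
      = ∑ k, hA.eigenvalues k * (c k)^2 := by
    conv_lhs => rw [← hξ]
    rw [map_sum, sum_inner]
    refine Finset.sum_congr rfl fun k _ => ?_
    rw [_root_.map_smul, eigen_clm_apply, smul_smul, real_inner_smul_left,
      hob.inner_right_fintype]
    ring
  have hnorm : ‖ξ‖ ^ 2 = ∑ k, (c k)^2 := by
    rw [← real_inner_self_eq_norm_sq]
    conv_lhs => rw [← hξ]
    rw [sum_inner]
    refine Finset.sum_congr rfl fun k _ => ?_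
    rw [real_inner_smul_left, hob.inner_right_fintype]
    ring
  rw [hexp, hnorm, Finset.mul_sum]
  exact Finset.sum_le_sum fun k _ => mul_le_mul_of_nonneg_right (h k) (sq_nonneg _)

lemma sum_eigen_eq_trace {A : Matrix (Fin n) (Fin n) ℝ} (hA : A.IsHermitian) :
    ∑ k, hA.eigenvalues k = ∑ i, A i i := by
  have h := congrArg Matrix.trace hA.spectral_theorem
  rw [Unitary.conjStarAlgAut_apply, Matrix.trace_mul_cycle] at h
  rw [Unitary.coe_star_mul_self, one_mul, Matrix.trace_diagonal] at h
  simpa [Matrix.trace, Matrix.diag] using h.symm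

variable {n : ℕ} {Z : Set (EuclideanSpace ℝ (Fin n))} {v : EuclideanSpace ℝ (Fin n) → ℝ}

lemma hessMatrix_eq_D2 (v : EuclideanSpace ℝ (Fin n) → ℝ) (x : EuclideanSpace ℝ (Fin n)) (i j : Fin n) :
    hessMatrix v x i j = D2 v x (EuclideanSpace.single i 1) (EuclideanSpace.single j 1) := by
  rw [hessMatrix, iteratedFDeriv_two_apply]
  simp [D2]

lemma contDiff_package (hZo : IsOpen Z) (hv : ContDiffOn ℝ 2 v Z) :
    (∀ x ∈ Z, HasFDerivAt v (D1 v x) x) ∧ (∀ x ∈ Z, HasFDerivAt (D1 v) (D2 v x) x) ∧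
      ContinuousOn (D2 v) Z := by
  have h2 : (2 : WithTop ℕ∞) = 1 + 1 := by norm_num
  have hv' : ContDiffOn ℝ (1+1) v Z := h2 ▸ hv
  rw [contDiffOn_succ_iff_fderiv_of_isOpen hZo] at hv'
  obtain ⟨hdiff, -, hf1⟩ := hv'
  refine ⟨fun x hx => ?_, fun x hx => ?_, ?_⟩
  · exact (hdiff.differentiableAt (hZo.mem_nhds hx)).hasFDerivAt
  · exact ((hf1.differentiableOn one_ne_zero).differentiableAt (hZo.mem_nhds hx)).hasFDerivAt
  · exact hf1.continuousOn_fderiv_of_isOpen hZo le_rfl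

lemma hess_symm (hZo : IsOpen Z) (hv : ContDiffOn ℝ 2 v Z) {x : EuclideanSpace ℝ (Fin n)}
    (hx : x ∈ Z) (a b : EuclideanSpace ℝ (Fin n)) : D2 v x a b = D2 v x b a := by
  obtain ⟨h1, h2, -⟩ := contDiff_package hZo hv
  exact second_derivative_symmetric_of_eventually
    (Filter.eventually_of_mem (hZo.mem_nhds hx) fun y hy => h1 y hy) (h2 x hx) a b

lemma hess_isHermitian (hZo : IsOpen Z) (hv : ContDiffOn ℝ 2 v Z)
    {x : EuclideanSpace ℝ (Fin n)} (hx : x ∈ Z) : (hessMatrix v x).IsHermitian := by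
  ext i j
  simp only [Matrix.conjTranspose_apply, RCLike.star_def, starRingEnd_apply, star_trivial]
  rw [hessMatrix_eq_D2, hessMatrix_eq_D2, hess_symm hZo hv hx]

/-- derivative along a line -/
lemma line_hasDerivAt {u : EuclideanSpace ℝ (Fin n) → ℝ}
    {U : EuclideanSpace ℝ (Fin n) →L[ℝ] ℝ} {x ξ : EuclideanSpace ℝ (Fin n)} {t : ℝ}
    (hd : HasFDerivAt u U (x + t • ξ)) :
    HasDerivAt (fun s : ℝ => u (x + s • ξ)) (U ξ) t := by
  have hline : HasDerivAt (fun s : ℝ => x + s • ξ) ξ t := by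
    simpa using ((hasDerivAt_id t).smul_const ξ).const_add x
  exact hd.comp_hasDerivAt t hline

/-- second derivative along a line -/
lemma line_hasDerivAt_D1 {x ξ : EuclideanSpace ℝ (Fin n)} {t : ℝ} {ζ : EuclideanSpace ℝ (Fin n)}
    (hd : HasFDerivAt (D1 v) (D2 v (x + t • ξ)) (x + t • ξ)) :
    HasDerivAt (fun s : ℝ => D1 v (x + s • ξ) ζ) (D2 v (x + t • ξ) ξ ζ) t := by
  have hline : HasDerivAt (fun s : ℝ => x + s • ξ) ξ t := by
    simpa using ((hasDerivAt_id t).smul_const ξ).const_add x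
  have h1 : HasDerivAt (fun s : ℝ => D1 v (x + s • ξ)) (D2 v (x + t • ξ) ξ) t := by
    exact hd.comp_hasDerivAt t hline
  simpa using h1.clm_apply (hasDerivAt_const t ζ)

/-- restriction of a convex function to a line is convex -/
lemma line_convexOn (hZc : Convex ℝ Z) (hv : ConvexOn ℝ Z v) (x ξ : EuclideanSpace ℝ (Fin n)) :
    ConvexOn ℝ {t : ℝ | x + t • ξ ∈ Z} (fun t => v (x + t • ξ)) := by
  have key : ∀ a b t₁ t₂ : ℝ, a + b = 1 →
      a • (x + t₁ • ξ) + b • (x + t₂ • ξ) = x + (a * t₁ + b * t₂) • ξ := by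
    intro a b t₁ t₂ hab
    calc a • (x + t₁ • ξ) + b • (x + t₂ • ξ)
        = (a + b) • x + (a * t₁ + b * t₂) • ξ := by module
      _ = x + (a * t₁ + b * t₂) • ξ := by rw [hab, one_smul]
  constructor
  · intro t₁ h₁ t₂ h₂ a b ha hb hab
    have h := hZc h₁ h₂ ha hb hab
    rw [key a b t₁ t₂ hab] at h
    simpa [smul_eq_mul] using h
  · intro t₁ h₁ t₂ h₂ a b ha hb hab
    have h := hv.2 h₁ h₂ ha hb hab
    rw [key a b t₁ t₂ hab] at h
    simpa [smul_eq_mul] using h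

lemma line_isOpen (hZo : IsOpen Z) (x ξ : EuclideanSpace ℝ (Fin n)) :
    IsOpen {t : ℝ | x + t • ξ ∈ Z} := by
  have hc : Continuous (fun t : ℝ => x + t • ξ) := by continuity
  exact hZo.preimage hc

variable {n : ℕ} {Z : Set (EuclideanSpace ℝ (Fin n))} {v : EuclideanSpace ℝ (Fin n) → ℝ}

lemma convex_nonpos_on (hn : 1 ≤ n) (hZo : IsOpen Z) (hZc : Convex ℝ Z)
    (hbd : Z ⊆ ball 0 (n : ℝ)) (hcont : ContinuousOn v (closure Z))
    (hconv : ConvexOn ℝ Z v) (hbv : ∀ x ∈ frontier Z, v x = 0) :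
    ∀ z ∈ Z, v z ≤ 0 := by
  intro z hz
  set e : EuclideanSpace ℝ (Fin n) := EuclideanSpace.single (⟨0, hn⟩ : Fin n) (1 : ℝ) with hedef
  have hnorme : ‖e‖ = 1 := by simp [hedef]
  set S : Set ℝ := {t : ℝ | z + t • e ∈ Z} with hSdef
  have hSo : IsOpen S := by
    have hc : Continuous (fun t : ℝ => z + t • e) :=
      continuous_const.add (continuous_id.smul continuous_const)
    exact hZo.preimage hc
  have hScv : Convex ℝ S := (line_convexOn hZc hconv z e).1
  have h0S : (0 : ℝ) ∈ S := by simp [hSdef, hz]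
  have hbdd : ∀ t ∈ S, |t| < n + ‖z‖ := by
    intro t ht
    have h1 : ‖z + t • e‖ < n := by simpa [mem_ball, dist_eq_norm] using hbd ht
    have h2 : |t| = ‖t • e‖ := by simp [norm_smul, hnorme]
    have h3 : ‖t • e‖ ≤ ‖z + t • e‖ + ‖z‖ := by
      have h4 := norm_sub_le (z + t • e) z
      rwa [add_sub_cancel_left] at h4
    linarith
  have hbddA : BddAbove S := ⟨n + ‖z‖, fun t ht => (le_abs_self t).trans (hbdd t ht).le⟩
  have hbddB : BddBelow S := ⟨-(n + ‖z‖), fun t ht => by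
    have h5 := (hbdd t ht).le
    have h6 := neg_abs_le t
    linarith⟩
  have hSne : S.Nonempty := ⟨0, h0S⟩
  set b := sSup S with hbdef
  set a := sInf S with hadef
  obtain ⟨ε, hε, hball⟩ := Metric.isOpen_iff.1 hSo 0 h0S
  have hεmem : ∀ t : ℝ, |t| < ε → t ∈ S := by
    intro t ht
    exact hball (by simpa [Real.dist_eq] using ht)
  have hb0 : 0 < b := by
    have h7 : ε / 2 ∈ S := hεmem _ (by rw [abs_of_pos (by linarith)]; linarith)
    have := le_csSup hbddA h7
    linarith
  have ha0 : a < 0 := by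
    have h8 : -(ε / 2) ∈ S := hεmem _ (by rw [abs_of_neg (by linarith)]; linarith)
    have := csInf_le hbddB h8
    linarith
  have hmem : ∀ t : ℝ, a < t → t < b → t ∈ S := by
    intro t h1 h2
    obtain ⟨s1, hs1S, hs1⟩ := exists_lt_of_csInf_lt hSne h1
    obtain ⟨s2, hs2S, hs2⟩ := exists_lt_of_lt_csSup hSne h2
    exact hScv.ordConnected.out hs1S hs2S ⟨hs1.le, hs2.le⟩
  have hbS : b ∉ S := by
    intro hbmem
    obtain ⟨δ, hδ, hball2⟩ := Metric.isOpen_iff.1 hSo b hbmem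
    have h9 : b + δ / 2 ∈ S := by
      apply hball2
      rw [mem_ball, Real.dist_eq, show b + δ / 2 - b = δ / 2 by ring, abs_of_pos (by linarith)]
      linarith
    have := le_csSup hbddA h9
    linarith
  have haS : a ∉ S := by
    intro hamem
    obtain ⟨δ, hδ, hball2⟩ := Metric.isOpen_iff.1 hSo a hamem
    have h10 : a - δ / 2 ∈ S := by
      apply hball2
      rw [mem_ball, Real.dist_eq, show a - δ / 2 - a = -(δ / 2) by ring,
        abs_of_neg (by linarith)]
      linarith
    have := csInf_le hbddB h10
    linarith
  set P : ℝ → EuclideanSpace ℝ (Fin n) := fun t => z + t • e with hPdef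
  have hPcont : Continuous P := continuous_const.add (continuous_id.smul continuous_const)
  have hab : a < b := ha0.trans hb0
  -- limits along rays
  have hray : ∀ c : ℝ, c ∉ S → (∀ s ∈ Ioo (0:ℝ) 1, s * c ∈ S) →
      P c ∈ frontier Z ∧ Tendsto (fun s => v (P (s * c))) (𝓝[<] (1:ℝ)) (𝓝 (v (P c))) := by
    intro c hcnot hcS
    have hIoo : Ioo (0:ℝ) 1 ∈ 𝓝[<] (1:ℝ) :=
      Ioo_mem_nhdsLT_of_mem (by constructor <;> norm_num)
    have htends : Tendsto (fun s : ℝ => P (s * c)) (𝓝[<] (1:ℝ)) (𝓝 (P c)) := by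
      have h1 : Tendsto (fun s : ℝ => s * c) (𝓝[<] (1:ℝ)) (𝓝 c) := by
        have h2 : Tendsto (fun s : ℝ => s * c) (𝓝 (1:ℝ)) (𝓝 (1 * c)) :=
          (continuous_id.mul continuous_const).tendsto 1
        rw [one_mul] at h2
        exact h2.mono_left nhdsWithin_le_nhds
      exact (hPcont.tendsto c).comp h1
    have hmemZ : ∀ᶠ s in 𝓝[<] (1:ℝ), P (s * c) ∈ Z := by
      filter_upwards [hIoo] with s hs
      exact hcS s hs
    have hclosure : P c ∈ closure Z := mem_closure_of_tendsto htends hmemZ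
    have hfront : P c ∈ frontier Z := by
      rw [frontier, hZo.interior_eq]
      exact ⟨hclosure, hcnot⟩
    have htendv : Tendsto (fun s => v (P (s * c))) (𝓝[<] (1:ℝ)) (𝓝 (v (P c))) := by
      have h2 : Tendsto (fun s : ℝ => P (s * c)) (𝓝[<] (1:ℝ)) (𝓝[closure Z] (P c)) := by
        rw [tendsto_nhdsWithin_iff]
        exact ⟨htends, hmemZ.mono fun s hs => subset_closure hs⟩
      exact ((hcont (P c) hclosure).tendsto).comp h2
    exact ⟨hfront, htendv⟩
  have hrayb := hray b hbS (fun s hs => hmem _ (by nlinarith [hs.1, hs.2]) (by nlinarith [hs.1, hs.2]))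
  have hraya := hray a haS (fun s hs => hmem _ (by nlinarith [hs.1, hs.2]) (by nlinarith [hs.1, hs.2]))
  set θ : ℝ := b / (b - a) with hθdef
  have hba : (0:ℝ) < b - a := by linarith
  have hθ0 : 0 < θ := div_pos hb0 hba
  have hθ1 : θ < 1 := by
    rw [hθdef, div_lt_one hba]
    linarith
  have hcomb : ∀ s ∈ Ioo (0:ℝ) 1, v z ≤ θ * v (P (s * a)) + (1 - θ) * v (P (s * b)) := by
    intro s hs
    have hpa : P (s * a) ∈ Z := hmem _ (by nlinarith [hs.1, hs.2]) (by nlinarith [hs.1, hs.2])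
    have hpb : P (s * b) ∈ Z := hmem _ (by nlinarith [hs.1, hs.2]) (by nlinarith [hs.1, hs.2])
    have hco : θ * (s * a) + (1 - θ) * (s * b) = 0 := by
      rw [hθdef]
      field_simp
      ring
    have hvec : θ • P (s * a) + (1 - θ) • P (s * b) = z := by
      show θ • (z + (s * a) • e) + (1 - θ) • (z + (s * b) • e) = z
      calc θ • (z + (s * a) • e) + (1 - θ) • (z + (s * b) • e)
          = (θ + (1 - θ)) • z + (θ * (s * a) + (1 - θ) * (s * b)) • e := by module
        _ = z := by rw [hco]; simp
    have hcx := hconv.2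
    have := hcx (a := θ) (b := 1 - θ) hpa hpb hθ0.le (by linarith) (by ring)
    rw [hvec] at this
    simpa [smul_eq_mul] using this
  have hlim : Tendsto (fun s => θ * v (P (s * a)) + (1 - θ) * v (P (s * b))) (𝓝[<] (1:ℝ))
      (𝓝 (θ * v (P a) + (1 - θ) * v (P b))) :=
    ((hraya.2.const_mul θ).add (hrayb.2.const_mul (1 - θ)))
  have hva : v (P a) = 0 := hbv _ hraya.1
  have hvb : v (P b) = 0 := hbv _ hrayb.1
  have hev : ∀ᶠ s in 𝓝[<] (1:ℝ), v z ≤ θ * v (P (s * a)) + (1 - θ) * v (P (s * b)) := by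
    filter_upwards [Ioo_mem_nhdsLT_of_mem (show (1:ℝ) ∈ Ioc (0:ℝ) 1 by constructor <;> norm_num)]
      with s hs
    exact hcomb s hs
  have := ge_of_tendsto hlim hev
  rw [hva, hvb] at this
  simpa using this

variable {n : ℕ} {Z : Set (EuclideanSpace ℝ (Fin n))} {v : EuclideanSpace ℝ (Fin n) → ℝ}

variable {n : ℕ} {Z : Set (EuclideanSpace ℝ (Fin n))} {v : EuclideanSpace ℝ (Fin n) → ℝ}
  {Lam : ℝ}

lemma convex_lower_bound (hn : 1 ≤ n) (hZo : IsOpen Z) (hbd : Z ⊆ ball 0 (n : ℝ))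
    (h0 : (0 : EuclideanSpace ℝ (Fin n)) ∈ Z) (hcont : ContinuousOn v (closure Z))
    (hv : ContDiffOn ℝ 2 v Z) (hbv : ∀ x ∈ frontier Z, v x = 0)
    (hdet : ∀ x ∈ Z, hessDet v x ≤ Lam) {c : ℝ} (hc : 0 < c) (hLc : Lam < (2 * c) ^ n) :
    ∀ z ∈ closure Z, c * (‖z‖ ^ 2 - (n : ℝ) ^ 2) ≤ v z := by
  by_contra hcon
  push_neg at hcon
  obtain ⟨z₀, hz₀, hz₀lt⟩ := hcon
  set F : EuclideanSpace ℝ (Fin n) → ℝ := fun x => v x - c * (‖x‖ ^ 2 - (n : ℝ) ^ 2) with hFdef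
  have hnpos : (0 : ℝ) < n := by exact_mod_cast hn
  have hclosed : closure Z ⊆ closedBall 0 (n : ℝ) := by
    have := closure_mono hbd
    rwa [closure_ball (0 : EuclideanSpace ℝ (Fin n)) (ne_of_gt hnpos)] at this
  have hcomp : IsCompact (closure Z) :=
    Metric.isCompact_of_isClosed_isBounded isClosed_closure
      ((Metric.isBounded_ball).subset hbd).closure
  have hFcont : ContinuousOn F (closure Z) :=
    hcont.sub (((continuous_norm.pow 2).sub continuous_const).const_smul c).continuousOn
  obtain ⟨x₀, hx₀mem, hx₀min⟩ := hcomp.exists_isMinOn ⟨z₀, hz₀⟩ hFcont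
  have hFx₀neg : F x₀ < 0 := lt_of_le_of_lt (hx₀min hz₀) (by simpa [hFdef] using sub_neg.2 hz₀lt)
  have hx₀Z : x₀ ∈ Z := by
    by_contra hx₀Z
    have hfr : x₀ ∈ frontier Z := by
      rw [frontier, hZo.interior_eq]
      exact ⟨hx₀mem, hx₀Z⟩
    have h1 : v x₀ = 0 := hbv _ hfr
    have h2 : ‖x₀‖ ≤ n := by simpa using hclosed hx₀mem
    have h3 : ‖x₀‖ ^ 2 ≤ (n : ℝ) ^ 2 := by nlinarith [norm_nonneg x₀]
    have : (0 : ℝ) ≤ F x₀ := by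
      rw [hFdef]
      simp only [h1]
      nlinarith
    linarith
  obtain ⟨hd1, hd2, hd2c⟩ := contDiff_package hZo hv
  have hlocmin : IsLocalMin F x₀ := by
    filter_upwards [hZo.mem_nhds hx₀Z] with y hy
    exact hx₀min (subset_closure hy)
  -- the quadratic form bound
  have hquad : ∀ ξ : EuclideanSpace ℝ (Fin n), 2 * c * ‖ξ‖ ^ 2 ≤ D2 v x₀ ξ ξ := by
    intro ξ
    set P : ℝ → EuclideanSpace ℝ (Fin n) := fun t => x₀ + t • ξ with hPdef
    have hP0 : P 0 = x₀ := by simp [hPdef]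
    have hPcont : Continuous P := continuous_const.add (continuous_id.smul continuous_const)
    set ip : ℝ := (inner ℝ x₀ ξ : ℝ) with hipdef
    set nn : ℝ := ‖ξ‖ ^ 2 with hnndef
    have hnormP : ∀ s : ℝ, ‖P s‖ ^ 2 = ‖x₀‖ ^ 2 + (2 * ip) * s + nn * s ^ 2 := by
      intro s
      rw [hPdef]
      simp only
      rw [norm_add_sq_real, real_inner_smul_right, norm_smul]
      simp [hipdef, hnndef, mul_pow, sq_abs]
      ring
    set g' : ℝ → ℝ := fun t => D1 v (P t) ξ - c * ((2 * ip) + (2 * nn) * t) with hg'def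
    have hminline : IsLocalMin (F ∘ P) 0 :=
      (hP0 ▸ hlocmin).comp_continuous hPcont.continuousAt
    have hev : ∀ᶠ t in 𝓝 0, HasDerivAt (F ∘ P) (g' t) t := by
      have hPev : ∀ᶠ t in 𝓝 (0:ℝ), P t ∈ Z :=
        hPcont.continuousAt (x := (0:ℝ)) (hZo.mem_nhds (hP0 ▸ hx₀Z))
      filter_upwards [hPev] with t ht
      have hv' : HasDerivAt (fun s => v (P s)) (D1 v (P t) ξ) t := line_hasDerivAt (hd1 _ ht)
      have hw : HasDerivAt (fun s : ℝ => c * (‖P s‖ ^ 2 - (n : ℝ) ^ 2))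
          (c * ((2 * ip) + (2 * nn) * t)) t := by
        have heq : (fun s : ℝ => c * (‖P s‖ ^ 2 - (n : ℝ) ^ 2))
            = fun s : ℝ => c * ((‖x₀‖ ^ 2 + (2 * ip) * s + nn * s ^ 2) - (n : ℝ) ^ 2) := by
          funext s
          rw [hnormP s]
        rw [heq]
        have hp1 : HasDerivAt (fun s : ℝ => ‖x₀‖ ^ 2 + (2 * ip) * s + nn * s ^ 2)
            ((2 * ip) + (2 * nn) * t) t := by
          have hb : HasDerivAt (fun s : ℝ => (2 * ip) * s) (2 * ip) t := by
            simpa using (hasDerivAt_id t).const_mul (2 * ip)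
          have hcsq : HasDerivAt (fun s : ℝ => nn * s ^ 2) ((2 * nn) * t) t := by
            have := (hasDerivAt_pow 2 t).const_mul nn
            simpa [mul_comm, mul_assoc, mul_left_comm] using this
          exact (hb.const_add (‖x₀‖ ^ 2)).add hcsq
        simpa using (hp1.sub_const ((n : ℝ) ^ 2)).const_mul c
      exact hv'.sub hw
    have hg'' : HasDerivAt g' (D2 v x₀ ξ ξ - c * (2 * nn)) 0 := by
      have h1 : HasDerivAt (fun s : ℝ => D1 v (P s) ξ) (D2 v x₀ ξ ξ) 0 := by
        have := line_hasDerivAt_D1 (v := v) (x := x₀) (ξ := ξ) (t := 0) (ζ := ξ)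
          (by rw [show x₀ + (0:ℝ) • ξ = x₀ by simp]; exact hd2 _ hx₀Z)
        simpa [show x₀ + (0:ℝ) • ξ = x₀ by simp] using this
      have h2 : HasDerivAt (fun t : ℝ => c * ((2 * ip) + (2 * nn) * t)) (c * (2 * nn)) 0 := by
        have hb : HasDerivAt (fun t : ℝ => (2 * nn) * t) (2 * nn) 0 := by
          simpa using (hasDerivAt_id (0:ℝ)).const_mul (2 * nn)
        simpa using (hb.const_add (2 * ip)).const_mul c
      exact h1.sub h2
    have := second_deriv_test_localMin hev hg'' hminline
    rw [hnndef] at this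
    nlinarith [this]
  -- contradiction via determinant
  have hA : (hessMatrix v x₀).IsHermitian := hess_isHermitian hZo hv hx₀Z
  have hquad' : ∀ ξ : EuclideanSpace ℝ (Fin n), (2 * c) * ‖ξ‖ ^ 2 ≤
      (inner ℝ ((Matrix.toEuclideanCLM (𝕜 := ℝ) (hessMatrix v x₀)) ξ) ξ : ℝ) := by
    intro ξ
    rw [quadform_eq_bilin (D2 v x₀) _ (hessMatrix_eq_D2 v x₀)]
    exact hquad ξ
  have heig : ∀ k, 2 * c ≤ hA.eigenvalues k := eigen_ge_of_quadform hA hquad'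
  have hdetlb : (2 * c) ^ n ≤ hessDet v x₀ := by
    rw [hessDet, hA.det_eq_prod_eigenvalues]
    calc (2 * c) ^ n = ∏ _k : Fin n, (2 * c) := by
          rw [Finset.prod_const]
          simp
      _ ≤ ∏ k, hA.eigenvalues k :=
          Finset.prod_le_prod (fun k _ => by positivity) (fun k _ => heig k)
      _ = ∏ k, ((hA.eigenvalues k : ℝ)) := rfl
  have := hdet x₀ hx₀Z
  linarith

variable {n : ℕ} {Z : Set (EuclideanSpace ℝ (Fin n))} {v : EuclideanSpace ℝ (Fin n) → ℝ}

variable {m : ℕ} {Z : Set (EuclideanSpace ℝ (Fin (m+1)))} {v : EuclideanSpace ℝ (Fin (m+1)) → ℝ}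

lemma oneD_measure_bound (hZo : IsOpen Z) (hZc : Convex ℝ Z)
    (hZball : ball (0 : EuclideanSpace ℝ (Fin (m+1))) 1 ⊆ Z)
    (hv : ContDiffOn ℝ 2 v Z) (hconv : ConvexOn ℝ Z v)
    {C : ℝ} (hC : 0 < C) (hub : ∀ z ∈ Z, v z ≤ 0) (hlb : ∀ z ∈ Z, -C ≤ v z)
    {a M : ℝ} (ha : 0 < a) (ha4 : a ≤ 1/8) (hM : 0 < M)
    {x u : EuclideanSpace ℝ (Fin (m+1))} (hx : ‖x‖ ≤ 1/4) (hu : ‖u‖ = 1) :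
    volume (Ioo (-a) a ∩ (fun t : ℝ => D2 v (x + t • u) u u) ⁻¹' (Ioi M))
      ≤ ENNReal.ofReal (4 * C / M) := by
  obtain ⟨hd1, hd2, hd2c⟩ := contDiff_package hZo hv
  set P : ℝ → EuclideanSpace ℝ (Fin (m+1)) := fun t => x + t • u with hPdef
  have hPcont : Continuous P := continuous_const.add (continuous_id.smul continuous_const)
  have hmemZ : ∀ t : ℝ, |t| ≤ 5/8 → P t ∈ Z := by
    intro t ht
    apply hZball
    rw [mem_ball, dist_eq_norm, sub_zero]
    calc ‖P t‖ ≤ ‖x‖ + ‖t • u‖ := norm_add_le _ _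
      _ = ‖x‖ + |t| := by rw [norm_smul, hu, Real.norm_eq_abs, mul_one]
      _ ≤ 1/4 + 5/8 := by linarith
      _ < 1 := by norm_num
  set S : Set ℝ := {t : ℝ | x + t • u ∈ Z} with hSdef
  have hSo : IsOpen S := hZo.preimage hPcont
  have hgc : ConvexOn ℝ S (fun t => v (x + t • u)) := line_convexOn hZc hconv x u
  set g : ℝ → ℝ := fun t => v (P t) with hgdef
  set g' : ℝ → ℝ := fun t => D1 v (P t) u with hg'def
  set g'' : ℝ → ℝ := fun t => D2 v (P t) u u with hg''def
  have hdg : ∀ t ∈ S, HasDerivAt g (g' t) t := fun t ht => line_hasDerivAt (hd1 _ ht)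
  have hdg' : ∀ t ∈ S, HasDerivAt g' (g'' t) t := fun t ht => line_hasDerivAt_D1 (hd2 _ ht)
  have hIccS : Icc (-(5/8) : ℝ) (5/8) ⊆ S := by
    intro t ht
    exact hmemZ t (abs_le.2 ⟨ht.1, ht.2⟩)
  have hgnonneg : ∀ t ∈ S, 0 ≤ g'' t := fun t ht =>
    convex_second_deriv_nonneg hSo hgc hdg ht (hdg' t ht)
  -- continuity of g'' on the interval
  have hg''cont : ContinuousOn g'' (Icc (-(5/8) : ℝ) (5/8)) := by
    have h1 : ContinuousOn (fun t : ℝ => D2 v (P t)) (Icc (-(5/8) : ℝ) (5/8)) :=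
      hd2c.comp hPcont.continuousOn (fun t ht => hIccS ht)
    exact (h1.clm_apply continuousOn_const).clm_apply continuousOn_const
  -- derivative bounds
  have haS : a ∈ S := hIccS ⟨by linarith, by linarith⟩
  have hmaS : -a ∈ S := hIccS ⟨by linarith, by linarith⟩
  have ha12S : a + 1/2 ∈ S := hIccS ⟨by linarith, by linarith⟩
  have hma12S : -a - 1/2 ∈ S := hIccS ⟨by linarith, by linarith⟩
  have hga : g' a ≤ 2 * C := by
    have h := convex_deriv_le_slope hgc haS ha12S (by linarith) (hdg a haS)
    have h1 : g (a + 1/2) ≤ 0 := hub _ ha12S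
    have h2 : -C ≤ g a := hlb _ haS
    have h5 : a + 1/2 - a = 1/2 := by ring
    rw [h5] at h
    calc g' a ≤ (g (a + 1/2) - g a) / (1/2) := h
      _ ≤ (0 - (-C)) / (1/2) := by
          apply div_le_div_of_nonneg_right _ (by norm_num)
          linarith
      _ = 2 * C := by ring
  have hgma : -(2 * C) ≤ g' (-a) := by
    have h := convex_slope_le_deriv hgc hma12S hmaS (by linarith) (hdg (-a) hmaS)
    have h1 : g (-a - 1/2) ≤ 0 := hub _ hma12S
    have h2 : -C ≤ g (-a) := hlb _ hmaS
    have h5 : -a - 1/2 - -a = -(1/2) := by ring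
    rw [h5] at h
    have h6 : (g (-a - 1/2) - g (-a)) / (-(1/2)) = (g (-a) - g (-a - 1/2)) * 2 := by ring
    rw [h6] at h
    calc -(2 * C) = (-C - 0) * 2 := by ring
      _ ≤ (g (-a) - g (-a - 1/2)) * 2 := by nlinarith
      _ ≤ g' (-a) := h
  -- FTC and Chebyshev
  have hle : -a ≤ a := by linarith
  have huIcc : uIcc (-a) a = Icc (-a) a := uIcc_of_le hle
  have hIcc_sub : Icc (-a) a ⊆ Icc (-(5/8) : ℝ) (5/8) := Icc_subset_Icc (by linarith) (by linarith)
  have hftc : ∫ t in (-a)..a, g'' t = g' a - g' (-a) := by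
    apply intervalIntegral.integral_eq_sub_of_hasDerivAt
    · intro t ht
      rw [huIcc] at ht
      exact hdg' t (hIccS (hIcc_sub ht))
    · apply ContinuousOn.intervalIntegrable
      rw [huIcc]
      exact hg''cont.mono hIcc_sub
  have hioo : ∫ t in Ioo (-a) a, g'' t = g' a - g' (-a) := by
    rw [← MeasureTheory.integral_Ioc_eq_integral_Ioo, ← intervalIntegral.integral_of_le hle, hftc]
  set D := Ioo (-a) a ∩ g'' ⁻¹' (Ioi M) with hDdef
  have hDopen : IsOpen D :=
    ContinuousOn.isOpen_inter_preimage
      (hg''cont.mono (Ioo_subset_Icc_self.trans hIcc_sub)) isOpen_Ioo isOpen_Ioi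
  have hDIoo : D ⊆ Ioo (-a) a := inter_subset_left
  have hDfin : volume D ≠ ⊤ :=
    (lt_of_le_of_lt (measure_mono hDIoo) measure_Ioo_lt_top).ne
  have hint : IntegrableOn g'' (Ioo (-a) a) :=
    ((hg''cont.mono hIcc_sub).integrableOn_Icc).mono_set Ioo_subset_Icc_self
  have hcheb : M * (volume D).toReal ≤ ∫ t in D, g'' t := by
    have h := setIntegral_ge_of_const_le hDopen.measurableSet hDfin
        (fun t ht => le_of_lt ht.2) (hint.mono_set hDIoo)
    rw [smul_eq_mul, mul_comm] at h
    exact h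
  have hmono : ∫ t in D, g'' t ≤ ∫ t in Ioo (-a) a, g'' t := by
    apply setIntegral_mono_set hint
    · exact ae_restrict_of_forall_mem measurableSet_Ioo
        (fun t ht => hgnonneg t (hIccS (hIcc_sub (Ioo_subset_Icc_self ht))))
    · exact HasSubset.Subset.eventuallyLE hDIoo
  have hkey : M * (volume D).toReal ≤ 4 * C := by
    rw [hioo] at hmono
    calc M * (volume D).toReal ≤ g' a - g' (-a) := hcheb.trans hmono
      _ ≤ 2 * C - -(2 * C) := by linarith
      _ = 4 * C := by ring
  have htr : (volume D).toReal ≤ 4 * C / M := by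
    rw [le_div_iff₀ hM]
    linarith
  calc volume D = ENNReal.ofReal ((volume D).toReal) := (ENNReal.ofReal_toReal hDfin).symm
    _ ≤ ENNReal.ofReal (4 * C / M) := ENNReal.ofReal_le_ofReal htr

variable {m : ℕ}

-- coordinates of the Euclidean point corresponding to a pi-type point
lemma euclid_symm_coords (z : Fin (m+1) → ℝ) (j : Fin (m+1)) :
    (((MeasurableEquiv.toLp 2 (Fin (m+1) → ℝ)).symm).symm z) j = z j := rfl

lemma euclid_coords (x : EuclideanSpace ℝ (Fin (m+1))) (j : Fin (m+1)) :
    ((MeasurableEquiv.toLp 2 (Fin (m+1) → ℝ)).symm) x j = x j := rfl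

lemma insertNth_euclid (i : Fin (m+1)) (t : ℝ) (y : Fin m → ℝ) :
    ((MeasurableEquiv.toLp 2 (Fin (m+1) → ℝ)).symm).symm (Fin.insertNth i t y)
      = ((MeasurableEquiv.toLp 2 (Fin (m+1) → ℝ)).symm).symm (Fin.insertNth i 0 y)
        + t • EuclideanSpace.single i (1:ℝ) := by
  apply PiLp.ext
  intro j
  rcases eq_or_ne j i with rfl | hj
  · simp [euclid_symm_coords, PiLp.add_apply, PiLp.smul_apply, EuclideanSpace.single_apply,
      Fin.insertNth_apply_same]
  · obtain ⟨k, rfl⟩ := Fin.exists_succAbove_eq hj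
    simp [euclid_symm_coords, PiLp.add_apply, PiLp.smul_apply, EuclideanSpace.single_apply,
      Fin.insertNth_apply_succAbove, (Fin.succAbove_ne i k)]

-- norm bound for points with small coordinates
lemma euclid_norm_le {x : EuclideanSpace ℝ (Fin (m+1))} {a : ℝ} (ha : 0 < a)
    (hcoords : ∀ j, |x j| ≤ a) (hsmall : (m+1 : ℝ) * a^2 ≤ 1/16) : ‖x‖ ≤ 1/4 := by
  rw [EuclideanSpace.norm_eq]
  have h1 : ∑ j, ‖x j‖^2 ≤ 1/16 := by
    calc ∑ j, ‖x j‖^2 ≤ ∑ _j : Fin (m+1), a^2 := by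
          apply Finset.sum_le_sum
          intro j _
          rw [Real.norm_eq_abs]
          exact pow_le_pow_left₀ (abs_nonneg _) (hcoords j) 2
      _ = (m+1 : ℝ) * a^2 := by rw [Finset.sum_const]; simp [mul_comm]
      _ ≤ 1/16 := hsmall
  calc Real.sqrt (∑ j, ‖x j‖^2) ≤ Real.sqrt (1/16) := Real.sqrt_le_sqrt h1
    _ = 1/4 := by rw [show (1/16 : ℝ) = (1/4)^2 by norm_num, Real.sqrt_sq (by norm_num)]

lemma bad_measure_bound {v : EuclideanSpace ℝ (Fin (m+1)) → ℝ} {a M C4M : ℝ} (ha : 0 < a)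
    (i : Fin (m+1))
    (Q : Set (EuclideanSpace ℝ (Fin (m+1))))
    (hQ : Q = ((MeasurableEquiv.toLp 2 (Fin (m+1) → ℝ)).symm) ⁻¹'
      (univ.pi fun _ : Fin (m+1) => Ioo (-a) a))
    (hbadmeas : MeasurableSet (Q ∩ (fun x => D2 v x (EuclideanSpace.single i 1)
      (EuclideanSpace.single i 1)) ⁻¹' (Ioi M)))
    (hslice : ∀ x : EuclideanSpace ℝ (Fin (m+1)), ‖x‖ ≤ 1/4 →
      volume (Ioo (-a) a ∩ (fun t : ℝ => D2 v (x + t • EuclideanSpace.single i 1)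
        (EuclideanSpace.single i 1) (EuclideanSpace.single i 1)) ⁻¹' (Ioi M))
        ≤ ENNReal.ofReal C4M)
    (hsmall : (m+1 : ℝ) * a^2 ≤ 1/16) :
    volume (Q ∩ (fun x => D2 v x (EuclideanSpace.single i 1)
      (EuclideanSpace.single i 1)) ⁻¹' (Ioi M))
      ≤ ENNReal.ofReal C4M * (ENNReal.ofReal (2*a))^m := by
  classical
  set e₀ := (MeasurableEquiv.toLp 2 (Fin (m+1) → ℝ)).symm with he₀
  set u : EuclideanSpace ℝ (Fin (m+1)) := EuclideanSpace.single i 1 with hu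
  set bad := Q ∩ (fun x => D2 v x u u) ⁻¹' (Ioi M) with hbad
  set badpi := e₀ '' bad with hbadpi
  have hpre : e₀ ⁻¹' badpi = bad := by
    rw [hbadpi]
    exact Set.preimage_image_eq bad e₀.injective
  have hbadpimeas : MeasurableSet badpi := e₀.measurableSet_image.2 hbadmeas
  have hv1 : volume bad = volume badpi := by
    rw [← hpre]
    exact (EuclideanSpace.volume_preserving_symm_measurableEquiv_toLp (Fin (m+1))).measure_preimage
      hbadpimeas.nullMeasurableSet
  set ε := MeasurableEquiv.piFinSuccAbove (fun _ : Fin (m+1) => ℝ) i with hε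
  set ν : Measure (Fin m → ℝ) := Measure.pi fun _ => volume with hν
  set μ : Measure ℝ := volume with hμ
  have hmp : MeasurePreserving ε (Measure.pi fun _ => volume) (μ.prod ν) :=
    measurePreserving_piFinSuccAbove (fun _ : Fin (m+1) => (volume : Measure ℝ)) i
  set s' := ε '' badpi with hs'
  have hs'meas : MeasurableSet s' := ε.measurableSet_image.2 hbadpimeas
  have hv2 : volume badpi = (μ.prod ν) s' := by
    have : ε ⁻¹' s' = badpi := Set.preimage_image_eq badpi ε.injective
    rw [← this, volume_pi]
    exact hmp.measure_preimage hs'meas.nullMeasurableSet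
  have hslicemem : ∀ (t : ℝ) (y : Fin m → ℝ),
      ((t, y) ∈ s') ↔ e₀.symm (Fin.insertNth i t y) ∈ bad := by
    intro t y
    rw [hs']
    constructor
    · rintro ⟨z, hz, hzeq⟩
      have : z = ε.symm (t, y) := by rw [← hzeq]; simp
      rw [this] at hz
      have hz' : ε.symm (t, y) = Fin.insertNth i t y := by
        simp [hε, MeasurableEquiv.piFinSuccAbove_symm_apply, Fin.insertNthEquiv]
      rw [hz'] at hz
      rw [hbadpi] at hz
      obtain ⟨w, hw, hweq⟩ := hz
      have : w = e₀.symm (Fin.insertNth i t y) := by rw [← hweq]; simp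
      rwa [← this]
    · intro h
      refine ⟨Fin.insertNth i t y, ?_, ?_⟩
      · rw [hbadpi]
        exact ⟨e₀.symm (Fin.insertNth i t y), h, by simp⟩
      · simp [hε, MeasurableEquiv.piFinSuccAbove_apply, Fin.insertNth_apply_same,
          Fin.insertNth_apply_succAbove]
  have hQmem : ∀ x : EuclideanSpace ℝ (Fin (m+1)), x ∈ Q ↔ ∀ j, x j ∈ Ioo (-a) a := by
    intro x
    rw [hQ]
    simp only [mem_preimage, mem_univ_pi]
    exact forall_congr' fun j => by rw [euclid_coords]
  set restQ : Set (Fin m → ℝ) := univ.pi fun _ : Fin m => Ioo (-a) a with hrestQ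
  have hrestQmeas : MeasurableSet restQ := MeasurableSet.univ_pi fun _ => measurableSet_Ioo
  have hslicebound : ∀ y : Fin m → ℝ,
      μ ((fun t => (t, y)) ⁻¹' s') ≤ restQ.indicator (fun _ => ENNReal.ofReal C4M) y := by
    intro y
    by_cases hy : y ∈ restQ
    · set xy := e₀.symm (Fin.insertNth i 0 y) with hxydef
      have hcoords : ∀ j, |xy j| ≤ a := by
        intro j
        rcases eq_or_ne j i with rfl | hj
        · rw [hxydef, euclid_symm_coords, Fin.insertNth_apply_same]
          simp [le_of_lt ha]
        · obtain ⟨k, rfl⟩ := Fin.exists_succAbove_eq hj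
          rw [hxydef, euclid_symm_coords, Fin.insertNth_apply_succAbove]
          have := hy k (mem_univ k)
          rw [abs_le]
          exact ⟨(this.1).le, (this.2).le⟩
      have hxy : ‖xy‖ ≤ 1/4 := euclid_norm_le ha hcoords hsmall
      have hsub : (fun t => (t, y)) ⁻¹' s' ⊆
          Ioo (-a) a ∩ (fun t : ℝ => D2 v (xy + t • u) u u) ⁻¹' (Ioi M) := by
        intro t ht
        rw [mem_preimage] at ht
        rw [hslicemem t y, insertNth_euclid, ← hxydef] at ht
        obtain ⟨htQ, htD⟩ := ht
        refine ⟨?_, htD⟩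
        have := (hQmem _).1 htQ i
        have hcoordi : (xy + t • u) i = t := by
          rw [PiLp.add_apply, PiLp.smul_apply, hxydef, euclid_symm_coords,
            Fin.insertNth_apply_same, hu]
          simp [EuclideanSpace.single_apply]
        rwa [hcoordi] at this
      have := (measure_mono hsub).trans (hslice xy hxy)
      rwa [indicator_of_mem hy]
    · have hempty : (fun t => (t, y)) ⁻¹' s' = ∅ := by
        rw [eq_empty_iff_forall_notMem]
        intro t ht
        rw [mem_preimage] at ht
        rw [hslicemem t y] at ht
        obtain ⟨htQ, -⟩ := ht
        apply hy
        intro k _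
        have := (hQmem _).1 htQ (i.succAbove k)
        rwa [euclid_symm_coords, Fin.insertNth_apply_succAbove] at this
      rw [hempty, indicator_of_notMem hy]
      simp
  have hnu : ν restQ = (ENNReal.ofReal (2*a))^m := by
    rw [hrestQ, hν, Measure.pi_pi]
    have : ∀ _j : Fin m, (volume (Ioo (-a) a)) = ENNReal.ofReal (2*a) := by
      intro j
      rw [Real.volume_Ioo]
      congr 1
      ring
    rw [Finset.prod_congr rfl fun j _ => this j, Finset.prod_const]
    simp
  calc volume bad = (μ.prod ν) s' := by rw [hv1, hv2]
    _ = ∫⁻ y, μ ((fun t => (t, y)) ⁻¹' s') ∂ν := Measure.prod_apply_symm hs'meas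
    _ ≤ ∫⁻ y, restQ.indicator (fun _ => ENNReal.ofReal C4M) y ∂ν :=
        lintegral_mono hslicebound
    _ = ENNReal.ofReal C4M * ν restQ := by
        rw [lintegral_indicator hrestQmeas, setLIntegral_const]
    _ = ENNReal.ofReal C4M * (ENNReal.ofReal (2*a))^m := by rw [hnu]

theorem uniform_hessian_lower_bound_on_large_set (n : ℕ) (hn : 1 ≤ n) (lam Lam : ℝ)
    (hlam : 0 < lam) (hlL : lam ≤ Lam) :
    ∃ c' > 0, ∃ c'' > 0,
      ∀ (Z : Set (EuclideanSpace ℝ (Fin n))) (v : EuclideanSpace ℝ (Fin n) → ℝ),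
      IsNormalized Z →
      ContinuousOn v (closure Z) → ConvexOn ℝ Z v → ContDiffOn ℝ 2 v Z →
      (∀ x ∈ frontier Z, v x = 0) →
      (∀ x ∈ Z, lam ≤ hessDet v x ∧ hessDet v x ≤ Lam) →
      ∃ E : Set (EuclideanSpace ℝ (Fin n)), MeasurableSet E ∧ E ⊆ Z ∧
        c' * (volume Z).toReal ≤ (volume E).toReal ∧
        ∀ x ∈ E, ∀ ξ : EuclideanSpace ℝ (Fin n),
          c'' * ‖ξ‖ ^ 2 ≤ (inner ℝ ((Matrix.toEuclideanCLM (𝕜 := ℝ) (hessMatrix v x)) ξ) ξ : ℝ) := by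
  obtain ⟨m, rfl⟩ : ∃ m, n = m + 1 := ⟨n - 1, by omega⟩
  have hLam0 : (0:ℝ) < Lam + 1 := by linarith
  set k : ℝ := ((m + 1 : ℕ) : ℝ) with hkdef
  have hk1 : (1:ℝ) ≤ k := by rw [hkdef]; exact_mod_cast Nat.succ_le_succ (Nat.zero_le m)
  have hk0 : (0:ℝ) < k := by linarith
  set cc : ℝ := (Lam + 1) ^ (((m + 1 : ℕ) : ℝ))⁻¹ / 2 with hccdef
  have hcc : 0 < cc := by
    rw [hccdef]
    have := Real.rpow_pos_of_pos hLam0 (((m + 1 : ℕ) : ℝ))⁻¹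
    linarith
  have hLcc : Lam < (2 * cc) ^ (m + 1) := by
    have h2cc : 2 * cc = (Lam + 1) ^ (((m + 1 : ℕ) : ℝ))⁻¹ := by rw [hccdef]; ring
    rw [h2cc, Real.rpow_inv_natCast_pow hLam0.le (Nat.succ_ne_zero m)]
    linarith
  set C : ℝ := cc * k ^ 2 with hCdef
  have hC : 0 < C := by positivity
  set a : ℝ := 1 / (8 * k) with hadef
  have ha : 0 < a := by positivity
  have ha4 : a ≤ 1 / 8 := by
    rw [hadef]
    rw [div_le_div_iff₀ (by positivity) (by norm_num)]
    nlinarith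
  have hk' : k = (m : ℝ) + 1 := by rw [hkdef]; push_cast; ring
  have hsmall : ((m : ℝ) + 1) * a ^ 2 ≤ 1 / 16 := by
    have h1 : k * a ^ 2 = 1 / (64 * k) := by
      rw [hadef]
      field_simp
      ring
    rw [← hk', h1, div_le_div_iff₀ (by positivity) (by norm_num)]
    nlinarith
  set M : ℝ := 4 * C * k / a with hMdef
  have hM : 0 < M := by positivity
  have hC4M : 4 * C / M = a / k := by
    rw [hMdef]
    field_simp
  set T : ℝ := k * M with hTdef
  have hT : 0 < T := by positivity
  set c'' : ℝ := lam / T ^ m with hc''def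
  have hc''pos : 0 < c'' := div_pos hlam (pow_pos hT m)
  have hballpos : 0 < (volume (ball (0 : EuclideanSpace ℝ (Fin (m+1))) ((m+1 : ℕ) : ℝ))).toReal :=
    ENNReal.toReal_pos (measure_ball_pos volume 0 hk0).ne' measure_ball_lt_top.ne
  set c' : ℝ := (a * (2 * a) ^ m) /
      (volume (ball (0 : EuclideanSpace ℝ (Fin (m+1))) ((m+1 : ℕ) : ℝ))).toReal with hc'def
  have hc'pos : 0 < c' := div_pos (by positivity) hballpos
  refine ⟨c', hc'pos, c'', hc''pos, ?_⟩
  intro Z v hZn hcont hconv hsmooth hbv hdet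
  obtain ⟨hZo, hZc, hZb1, hZbn⟩ := hZn
  have h0Z : (0 : EuclideanSpace ℝ (Fin (m+1))) ∈ Z := hZb1 (mem_ball_self one_pos)
  obtain ⟨hd1, hd2, hd2c⟩ := contDiff_package hZo hsmooth
  -- upper and lower bounds for v
  have hub : ∀ z ∈ Z, v z ≤ 0 := convex_nonpos_on hn hZo hZc hZbn hcont hconv hbv
  have hlow : ∀ z ∈ closure Z, cc * (‖z‖ ^ 2 - ((m+1 : ℕ) : ℝ) ^ 2) ≤ v z :=
    convex_lower_bound hn hZo hZbn h0Z hcont hsmooth hbv (fun x hx => (hdet x hx).2) hcc hLcc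
  have hlb : ∀ z ∈ Z, -C ≤ v z := by
    intro z hz
    have h := hlow z (subset_closure hz)
    have h2 : 0 ≤ cc * ‖z‖ ^ 2 := by positivity
    rw [hCdef, hkdef]
    nlinarith
  -- the cube
  set e₀ := (MeasurableEquiv.toLp 2 (Fin (m+1) → ℝ)).symm with he₀
  set Qpi : Set (Fin (m+1) → ℝ) := univ.pi fun _ : Fin (m+1) => Ioo (-a) a with hQpi
  set Q : Set (EuclideanSpace ℝ (Fin (m+1))) := e₀ ⁻¹' Qpi with hQ
  have hQmem : ∀ x : EuclideanSpace ℝ (Fin (m+1)), x ∈ Q ↔ ∀ j, x j ∈ Ioo (-a) a := by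
    intro x
    rw [hQ, hQpi]
    simp only [mem_preimage, mem_univ_pi]
    exact forall_congr' fun j => by rw [euclid_coords]
  have hQopen : IsOpen Q := by
    have h1 : Q = ⋂ j : Fin (m+1), (EuclideanSpace.proj (𝕜 := ℝ) j) ⁻¹' (Ioo (-a) a) := by
      ext x
      rw [hQmem x]
      simp [EuclideanSpace.proj]
    rw [h1]
    exact isOpen_iInter_of_finite fun j => isOpen_Ioo.preimage (EuclideanSpace.proj j).continuous
  have hQZ : Q ⊆ Z := by
    intro x hx
    have hcoords : ∀ j, |x j| ≤ a := by
      intro j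
      have := (hQmem x).1 hx j
      rw [abs_le]
      exact ⟨this.1.le, this.2.le⟩
    have hnx : ‖x‖ ≤ 1/4 := euclid_norm_le ha hcoords hsmall
    apply hZb1
    rw [mem_ball, dist_eq_norm, sub_zero]
    linarith
  have hQpimeas : MeasurableSet Qpi := MeasurableSet.univ_pi fun _ => measurableSet_Ioo
  have hvolQ : volume Q = (ENNReal.ofReal (2 * a)) ^ (m + 1) := by
    rw [hQ, (EuclideanSpace.volume_preserving_symm_measurableEquiv_toLp
      (Fin (m+1))).measure_preimage hQpimeas.nullMeasurableSet, hQpi, volume_pi_pi]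
    have h2 : ∀ _j : Fin (m+1), volume (Ioo (-a) a) = ENNReal.ofReal (2 * a) := by
      intro j
      rw [Real.volume_Ioo]
      congr 1
      ring
    rw [Finset.prod_congr rfl fun j _ => h2 j, Finset.prod_const]
    simp
  -- the bad sets
  set bad : Fin (m+1) → Set (EuclideanSpace ℝ (Fin (m+1))) := fun i =>
    Q ∩ (fun x => D2 v x (EuclideanSpace.single i 1) (EuclideanSpace.single i 1)) ⁻¹' (Ioi M)
    with hbaddef
  have hbadopen : ∀ i, IsOpen (bad i) := by
    intro i
    apply ContinuousOn.isOpen_inter_preimage _ hQopen isOpen_Ioi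
    exact (((hd2c.mono hQZ).clm_apply continuousOn_const).clm_apply continuousOn_const)
  have hbadbd : ∀ i, volume (bad i) ≤
      ENNReal.ofReal (a / k) * (ENNReal.ofReal (2 * a)) ^ m := by
    intro i
    have hsl : ∀ x : EuclideanSpace ℝ (Fin (m+1)), ‖x‖ ≤ 1/4 →
        volume (Ioo (-a) a ∩ (fun t : ℝ => D2 v (x + t • EuclideanSpace.single i 1)
          (EuclideanSpace.single i 1) (EuclideanSpace.single i 1)) ⁻¹' (Ioi M))
          ≤ ENNReal.ofReal (4 * C / M) := by
      intro x hx
      exact oneD_measure_bound hZo hZc hZb1 hsmooth hconv hC hub hlb ha ha4 hM hx (by simp)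
    have h := bad_measure_bound ha i Q hQ (hbadopen i).measurableSet hsl hsmall
    rwa [hC4M] at h
  set U : Set (EuclideanSpace ℝ (Fin (m+1))) := ⋃ i, bad i with hU
  have hUQ : U ⊆ Q := iUnion_subset fun i => inter_subset_left
  have hUmeas : MeasurableSet U := MeasurableSet.iUnion fun i => (hbadopen i).measurableSet
  have hvolU : volume U ≤ ENNReal.ofReal a * (ENNReal.ofReal (2 * a)) ^ m := by
    calc volume U ≤ ∑ i, volume (bad i) := measure_iUnion_fintype_le _ _
      _ ≤ ∑ _i : Fin (m+1), ENNReal.ofReal (a / k) * (ENNReal.ofReal (2 * a)) ^ m :=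
          Finset.sum_le_sum fun i _ => hbadbd i
      _ = (m+1 : ℕ) * (ENNReal.ofReal (a / k) * (ENNReal.ofReal (2 * a)) ^ m) := by
          rw [Finset.sum_const, Finset.card_univ, Fintype.card_fin, nsmul_eq_mul]
      _ = ENNReal.ofReal a * (ENNReal.ofReal (2 * a)) ^ m := by
          rw [← mul_assoc]
          congr 1
          rw [← ENNReal.ofReal_natCast (m+1), ← ENNReal.ofReal_mul (by positivity)]
          congr 1
          rw [← hkdef]
          field_simp
  set E : Set (EuclideanSpace ℝ (Fin (m+1))) := Q \ U with hE
  have hEmeas : MeasurableSet E := hQopen.measurableSet.diff hUmeas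
  have hEZ : E ⊆ Z := (diff_subset).trans hQZ
  have hvolQfin : volume Q ≠ ⊤ := by
    rw [hvolQ]
    exact (ENNReal.pow_lt_top ENNReal.ofReal_lt_top).ne
  have hvolE : volume E = volume Q - volume U := measure_diff hUQ hUmeas.nullMeasurableSet
    ((lt_of_le_of_lt (measure_mono hUQ) hvolQfin.lt_top).ne)
  have hEtoReal : a * (2 * a) ^ m ≤ (volume E).toReal := by
    have hUle : volume U ≤ volume Q := measure_mono hUQ
    rw [hvolE, ENNReal.toReal_sub_of_le hUle hvolQfin]
    have h1 : (volume Q).toReal = (2 * a) ^ (m + 1) := by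
      rw [hvolQ, ENNReal.toReal_pow, ENNReal.toReal_ofReal (by positivity)]
    have h2 : (volume U).toReal ≤ a * (2 * a) ^ m := by
      have := ENNReal.toReal_mono ?_ hvolU
      · rwa [ENNReal.toReal_mul, ENNReal.toReal_pow, ENNReal.toReal_ofReal (by positivity),
          ENNReal.toReal_ofReal (by positivity)] at this
      · exact (ENNReal.mul_lt_top ENNReal.ofReal_lt_top
          (ENNReal.pow_lt_top ENNReal.ofReal_lt_top)).ne
    have h3 : (2 * a) ^ (m + 1) = 2 * a * (2 * a) ^ m := by ring
    rw [h1, h3]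
    nlinarith [pow_pos (by linarith : (0:ℝ) < 2 * a) m]
  refine ⟨E, hEmeas, hEZ, ?_, ?_⟩
  · -- volume estimate
    have hZfin : volume Z ≤ volume (ball (0 : EuclideanSpace ℝ (Fin (m+1))) ((m+1 : ℕ) : ℝ)) :=
      measure_mono hZbn
    have h1 : (volume Z).toReal ≤
        (volume (ball (0 : EuclideanSpace ℝ (Fin (m+1))) ((m+1 : ℕ) : ℝ))).toReal :=
      ENNReal.toReal_mono measure_ball_lt_top.ne hZfin
    calc c' * (volume Z).toReal
        ≤ c' * (volume (ball (0 : EuclideanSpace ℝ (Fin (m+1))) ((m+1 : ℕ) : ℝ))).toReal :=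
          mul_le_mul_of_nonneg_left h1 hc'pos.le
      _ = a * (2 * a) ^ m := by
          rw [hc'def, div_mul_cancel₀ _ hballpos.ne']
      _ ≤ (volume E).toReal := hEtoReal
  · -- pointwise Hessian bound
    intro x hxE ξ
    have hxQ : x ∈ Q := hxE.1
    have hxZ : x ∈ Z := hQZ hxQ
    have hA : (hessMatrix v x).IsHermitian := hess_isHermitian hZo hsmooth hxZ
    -- positive semidefiniteness
    have hq0 : ∀ ζ : EuclideanSpace ℝ (Fin (m+1)), 0 ≤ D2 v x ζ ζ := by
      intro ζ
      have h0 : x + (0:ℝ) • ζ = x := by simp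
      have hS : IsOpen {t : ℝ | x + t • ζ ∈ Z} :=
        hZo.preimage (continuous_const.add (continuous_id.smul continuous_const))
      have hmem0 : (0:ℝ) ∈ {t : ℝ | x + t • ζ ∈ Z} := by
        simp only [mem_setOf_eq, h0]
        exact hxZ
      refine convex_second_deriv_nonneg (t₀ := (0:ℝ)) hS (line_convexOn hZc hconv x ζ)
        (fun t ht => line_hasDerivAt (hd1 _ ht)) hmem0 ?_
      have := line_hasDerivAt_D1 (v := v) (x := x) (ξ := ζ) (t := 0) (ζ := ζ)
        (by rw [h0]; exact hd2 _ hxZ)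
      rwa [h0] at this
    have heig0 : ∀ j, 0 ≤ hA.eigenvalues j := by
      apply eigen_ge_of_quadform hA
      intro ζ
      rw [quadform_eq_bilin (D2 v x) _ (hessMatrix_eq_D2 v x)]
      simpa using hq0 ζ
    -- diagonal entries bounded by M
    have hdiag : ∀ i, hessMatrix v x i i ≤ M := by
      intro i
      rw [hessMatrix_eq_D2]
      by_contra hcon
      push_neg at hcon
      exact hxE.2 (mem_iUnion.2 ⟨i, ⟨hxQ, hcon⟩⟩)
    have htr : ∑ j, hA.eigenvalues j ≤ T := by
      rw [sum_eigen_eq_trace hA]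
      calc ∑ i, hessMatrix v x i i ≤ ∑ _i : Fin (m+1), M :=
            Finset.sum_le_sum fun i _ => hdiag i
        _ = k * M := by
            rw [Finset.sum_const, Finset.card_univ, Fintype.card_fin, nsmul_eq_mul, hkdef]
        _ = T := hTdef.symm
    have heigT : ∀ j, hA.eigenvalues j ≤ T :=
      fun j => (Finset.single_le_sum (fun i _ => heig0 i) (Finset.mem_univ j)).trans htr
    have hdetlam : lam ≤ ∏ j, hA.eigenvalues j := by
      have h := (hdet x hxZ).1
      rwa [hessDet, hA.det_eq_prod_eigenvalues] at h
    have heigc'' : ∀ j, c'' ≤ hA.eigenvalues j := by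
      intro j
      have hprod : ∏ i ∈ Finset.univ.erase j, hA.eigenvalues i ≤ T ^ m := by
        calc ∏ i ∈ Finset.univ.erase j, hA.eigenvalues i
            ≤ ∏ _i ∈ Finset.univ.erase j, T :=
              Finset.prod_le_prod (fun i _ => heig0 i) (fun i _ => heigT i)
          _ = T ^ m := by
              rw [Finset.prod_const, Finset.card_erase_of_mem (Finset.mem_univ j),
                Finset.card_univ, Fintype.card_fin, Nat.add_sub_cancel]
      have hlamle : lam ≤ hA.eigenvalues j * T ^ m := by
        calc lam ≤ ∏ i, hA.eigenvalues i := hdetlam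
          _ = hA.eigenvalues j * ∏ i ∈ Finset.univ.erase j, hA.eigenvalues i :=
              (Finset.mul_prod_erase _ _ (Finset.mem_univ j)).symm
          _ ≤ hA.eigenvalues j * T ^ m :=
              mul_le_mul_of_nonneg_left hprod (heig0 j)
      rw [hc''def, div_le_iff₀ (pow_pos hT m)]
      exact hlamle
    exact quadform_ge_of_eigen hA heigc'' ξ
end

section
/- Let Ω ⊆ ℝⁿ be open and convex, let u : Ω → ℝ be convex and differentiable, let x ∈ Ω and t > 0, and suppose S(x,2t) ⊆ Ω. Let T be an invertible affine map such that B(0,1) ⊆ T(S(x,t)) ⊆ B(0,n). Then B(0,1) ⊆ T(S(x,2t)) ⊆ B(0,3n). -/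
open MeasureTheory Metric Set
open scoped Pointwise

/-- The section of `u` centered at `x` with height `t`:
`S(x,t) = {y ∈ Ω : u y ≤ u x + ∇u(x)·(y-x) + t}`. -/
noncomputable def sect {n : ℕ} (Ω : Set (EuclideanSpace ℝ (Fin n)))
    (u : EuclideanSpace ℝ (Fin n) → ℝ) (x : EuclideanSpace ℝ (Fin n)) (t : ℝ) :
    Set (EuclideanSpace ℝ (Fin n)) :=
  {y ∈ Ω | u y ≤ u x + (inner ℝ (gradient u x) (y - x) : ℝ) + t}

/-- Dilation of a set by a factor `τ` with respect to the point `x`: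
`τ S = {y : x + (y-x)/τ ∈ S}`. -/
def dilate {n : ℕ} (x : EuclideanSpace ℝ (Fin n)) (τ : ℝ)
    (s : Set (EuclideanSpace ℝ (Fin n))) : Set (EuclideanSpace ℝ (Fin n)) :=
  {y | x + τ⁻¹ • (y - x) ∈ s}

theorem normalizing_map_almost_normalizes_double_section
    (n : ℕ) (Ω : Set (EuclideanSpace ℝ (Fin n)))
    (hΩopen : IsOpen Ω) (hΩconv : Convex ℝ Ω)
    (u : EuclideanSpace ℝ (Fin n) → ℝ)
    (huconv : ConvexOn ℝ Ω u) (hudiff : DifferentiableOn ℝ u Ω)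
    (x : EuclideanSpace ℝ (Fin n)) (hx : x ∈ Ω) (t : ℝ) (ht : 0 < t)
    (h2t : sect Ω u x (2 * t) ⊆ Ω)
    (T : EuclideanSpace ℝ (Fin n) →ᵃ[ℝ] EuclideanSpace ℝ (Fin n))
    (hT : Function.Bijective T)
    (hT1 : ball (0 : EuclideanSpace ℝ (Fin n)) 1 ⊆ T '' sect Ω u x t)
    (hTn : T '' sect Ω u x t ⊆ ball (0 : EuclideanSpace ℝ (Fin n)) n) :
    ball (0 : EuclideanSpace ℝ (Fin n)) 1 ⊆ T '' sect Ω u x (2 * t) ∧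
      T '' sect Ω u x (2 * t) ⊆ ball (0 : EuclideanSpace ℝ (Fin n)) (3 * n) := by
  have hmono : sect Ω u x t ⊆ sect Ω u x (2 * t) := by
    intro y hy
    exact ⟨hy.1, by nlinarith [hy.2]⟩
  have hxsect : x ∈ sect Ω u x t := by
    refine ⟨hx, ?_⟩
    simp only [sub_self, inner_zero_right]
    linarith
  have hTx : ‖T x‖ < n := by
    have := hTn ⟨x, hxsect, rfl⟩
    simpa [mem_ball_zero_iff] using this
  refine ⟨hT1.trans (Set.image_mono hmono), ?_⟩
  rintro _ ⟨y, hy, rfl⟩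
  set z := AffineMap.lineMap x y (1 / 2 : ℝ) with hzdef
  have hzeq : z = (1 / 2 : ℝ) • x + (1 / 2 : ℝ) • y := by
    simp only [hzdef, AffineMap.lineMap_apply, vsub_eq_sub, vadd_eq_add]
    module
  have hzΩ : z ∈ Ω := by
    rw [hzeq]
    exact hΩconv hx hy.1 (by norm_num) (by norm_num) (by norm_num)
  have huz : u z ≤ (1 / 2 : ℝ) * u x + (1 / 2 : ℝ) * u y := by
    have := huconv.2 hx hy.1 (by norm_num : (0:ℝ) ≤ 1/2) (by norm_num : (0:ℝ) ≤ 1/2)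
      (by norm_num : (1/2 : ℝ) + 1/2 = 1)
    rw [hzeq]
    simpa [smul_eq_mul] using this
  have hinner : (inner ℝ (gradient u x) (z - x) : ℝ)
      = (1 / 2 : ℝ) * (inner ℝ (gradient u x) (y - x) : ℝ) := by
    have : z - x = (1 / 2 : ℝ) • (y - x) := by rw [hzeq]; module
    rw [this, real_inner_smul_right]
  have hzsect : z ∈ sect Ω u x t := by
    refine ⟨hzΩ, ?_⟩
    rw [hinner]
    have := hy.2
    linarith
  have hTz : ‖T z‖ < n := by
    have := hTn ⟨z, hzsect, rfl⟩
    simpa [mem_ball_zero_iff] using this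
  have hTy : T y = (2 : ℝ) • T z - T x := by
    have h := (T.apply_lineMap x y (1 / 2 : ℝ)).symm
    rw [← hzdef] at h
    rw [AffineMap.lineMap_apply] at h
    simp only [vsub_eq_sub, vadd_eq_add] at h
    have : (2 : ℝ) • T z = (2 : ℝ) • ((1 / 2 : ℝ) • (T y - T x) + T x) := by rw [h]
    rw [this]
    module
  rw [mem_ball_zero_iff, hTy]
  calc ‖(2 : ℝ) • T z - T x‖ ≤ ‖(2 : ℝ) • T z‖ + ‖T x‖ := norm_sub_le _ _
    _ = 2 * ‖T z‖ + ‖T x‖ := by rw [norm_smul]; simp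
    _ < 3 * n := by linarith
end
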